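/- arXiv:1706.05537 — 2 statements merged into one kernel-verified Lean document; each statement's English description precedes it below -/
import Mathlib

section
/- Let n be a positive integer. Let 𝒜 and ℬ be non-empty cross-intersecting families of subsets of [n] = {1, ..., n}, and suppose moreover that 𝒜 is intersecting. Let a_0, a_1, ..., a_n and b_0, b_1, ..., b_n be non-negative real numbers such that a_i + b_i ≥ a_{n-i} + b_{n-i} and a_{n-i} ≥ b_i for every integer i with 0 ≤ i ≤ n/2. Then Σ_{A ∈ 𝒜} a_{|A|} + Σ_{B ∈ ℬ} b_{|B|} ≤ Σ_{S ∈ 𝒮_n} a_{|S|} + Σ_{S ∈ 𝒮_n} b_{|S|}, where 𝒮_n = {S ⊆ [n] : 1 ∈ S}. -/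
open Finset

/-- Number of sets of size `k` in the family `𝒞`. -/
private def lvl (𝒞 : Finset (Finset ℕ)) (k : ℕ) : ℕ :=
  (𝒞.filter (fun S => S.card = k)).card

private lemma borg_cross_count (n k : ℕ) (hk : k ≤ n) (𝒞 𝒟 : Finset (Finset ℕ))
    (h𝒞 : ∀ C ∈ 𝒞, C ⊆ Icc 1 n) (h𝒟 : ∀ D ∈ 𝒟, D ⊆ Icc 1 n)
    (h : ∀ C ∈ 𝒞, ∀ D ∈ 𝒟, (C ∩ D).Nonempty) :
    lvl 𝒞 k + lvl 𝒟 (n - k) ≤ ((Icc 1 n).powersetCard k).card := by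
  classical
  have hUcard : (Icc 1 n).card = n := by rw [Nat.card_Icc]; omega
  set 𝒞k := 𝒞.filter (fun S => S.card = k) with h𝒞k
  set 𝒟k := (𝒟.filter (fun S => S.card = n - k)).image (fun D => Icc 1 n \ D) with h𝒟k
  have hDcard : ∀ D ∈ 𝒟.filter (fun S => S.card = n - k), (Icc 1 n \ D).card = k := by
    intro D hD
    rw [mem_filter] at hD
    rw [card_sdiff_of_subset (h𝒟 D hD.1), hUcard, hD.2]; omega
  have himg : (𝒟.filter (fun S => S.card = n - k)).card = 𝒟k.card := by
    rw [h𝒟k]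
    refine (card_image_of_injOn ?_).symm
    intro D₁ h₁ D₂ h₂ he
    simp only [mem_coe] at h₁ h₂
    have h₁' : D₁ ⊆ Icc 1 n := h𝒟 D₁ (mem_filter.1 h₁).1
    have h₂' : D₂ ⊆ Icc 1 n := h𝒟 D₂ (mem_filter.1 h₂).1
    calc D₁ = Icc 1 n \ (Icc 1 n \ D₁) := (Finset.sdiff_sdiff_eq_self h₁').symm
      _ = Icc 1 n \ (Icc 1 n \ D₂) := congrArg (fun S => Icc 1 n \ S) he
      _ = D₂ := Finset.sdiff_sdiff_eq_self h₂'
  have hdisj : Disjoint 𝒞k 𝒟k := by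
    rw [disjoint_left]
    intro S hS hS'
    rw [h𝒟k, mem_image] at hS'
    obtain ⟨D, hD, rfl⟩ := hS'
    rw [h𝒞k, mem_filter] at hS
    obtain ⟨x, hx⟩ := h _ hS.1 _ (mem_filter.1 hD).1
    rw [mem_inter, mem_sdiff] at hx
    exact hx.1.2 hx.2
  have hsub : 𝒞k ∪ 𝒟k ⊆ (Icc 1 n).powersetCard k := by
    intro S hS
    rw [mem_union] at hS
    rw [mem_powersetCard]
    rcases hS with hS | hS
    · rw [h𝒞k, mem_filter] at hS
      exact ⟨h𝒞 _ hS.1, hS.2⟩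
    · rw [h𝒟k, mem_image] at hS
      obtain ⟨D, hD, rfl⟩ := hS
      exact ⟨sdiff_subset, hDcard D hD⟩
  have hle := card_le_card hsub
  rw [card_union_of_disjoint hdisj] at hle
  unfold lvl
  rw [← h𝒞k, himg]
  exact hle

private lemma borg_level_count (n k : ℕ) (hn : 1 ≤ n) (hk : k ≤ n) :
    ((Icc 1 n).powersetCard k).card =
      lvl ((Icc 1 n).powerset.filter (fun S => 1 ∈ S)) k
      + lvl ((Icc 1 n).powerset.filter (fun S => 1 ∈ S)) (n - k) := by
  classical
  have hUcard : (Icc 1 n).card = n := by rw [Nat.card_Icc]; omega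
  have h1U : (1 : ℕ) ∈ Icc 1 n := by rw [mem_Icc]; omega
  rw [← Finset.card_filter_add_card_filter_not
      (s := (Icc 1 n).powersetCard k) (p := fun S => 1 ∈ S)]
  congr 1
  · unfold lvl
    congr 1
    ext S
    simp only [mem_filter, mem_powersetCard, mem_powerset]
    tauto
  · unfold lvl
    refine Finset.card_nbij (fun S => Icc 1 n \ S) ?_ ?_ ?_
    · intro S hS
      simp only [mem_coe, mem_filter, mem_powersetCard] at hS
      simp only [mem_coe, mem_filter, mem_powerset, mem_sdiff]
      refine ⟨⟨sdiff_subset, h1U, hS.2⟩, ?_⟩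
      rw [card_sdiff_of_subset hS.1.1, hUcard, hS.1.2]
    · intro S₁ h₁ S₂ h₂ he
      simp only [mem_coe, mem_filter, mem_powersetCard] at h₁ h₂
      calc S₁ = Icc 1 n \ (Icc 1 n \ S₁) := (Finset.sdiff_sdiff_eq_self h₁.1.1).symm
        _ = Icc 1 n \ (Icc 1 n \ S₂) := congrArg (fun S => Icc 1 n \ S) he
        _ = S₂ := Finset.sdiff_sdiff_eq_self h₂.1.1
    · intro T hT
      simp only [mem_coe, mem_filter, mem_powerset] at hT
      refine ⟨Icc 1 n \ T, ?_, ?_⟩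
      · simp only [mem_coe, mem_filter, mem_powersetCard]
        refine ⟨⟨sdiff_subset, ?_⟩, fun h => (mem_sdiff.1 h).2 hT.1.2⟩
        rw [card_sdiff_of_subset hT.1.1, hUcard, hT.2]; omega
      · exact Finset.sdiff_sdiff_eq_self hT.1.1

private lemma borg_ekr (n k : ℕ) (hn : 1 ≤ n) (hk2 : 2 * k ≤ n)
    (𝒜 : Finset (Finset ℕ)) (h𝒜 : ∀ A ∈ 𝒜, A ⊆ Icc 1 n)
    (hint : ∀ A ∈ 𝒜, ∀ A' ∈ 𝒜, (A ∩ A').Nonempty) :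
    lvl 𝒜 k ≤ lvl ((Icc 1 n).powerset.filter (fun S => 1 ∈ S)) k := by
  classical
  rcases Nat.eq_zero_or_pos k with rfl | hk1
  · have h0 : 𝒜.filter (fun S => S.card = 0) = ∅ := by
      rw [filter_eq_empty_iff]
      intro A hA hA0
      obtain ⟨x, hx⟩ := hint A hA A hA
      rw [card_eq_zero] at hA0
      subst hA0
      simp at hx
    unfold lvl
    rw [h0]
    simp
  · have hkn : k ≤ n := by omega
    have hN : lvl ((Icc 1 n).powerset.filter (fun S => 1 ∈ S)) k = (n - 1).choose (k - 1) := by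
      have hbij : lvl ((Icc 1 n).powerset.filter (fun S => 1 ∈ S)) k
          = ((Icc 2 n).powersetCard (k - 1)).card := by
        unfold lvl
        refine Finset.card_nbij (fun S => S.erase 1) ?_ ?_ ?_
        · intro S hS
          simp only [mem_coe, mem_filter, mem_powerset] at hS
          rw [mem_coe, mem_powersetCard]
          constructor
          · intro x hx
            rw [mem_erase] at hx
            have hx' := hS.1.1 hx.2
            rw [mem_Icc] at hx' ⊢
            omega
          · rw [card_erase_of_mem hS.1.2, hS.2]
        · intro S₁ h₁ S₂ h₂ he
          simp only [mem_coe, mem_filter, mem_powerset] at h₁ h₂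
          calc S₁ = insert 1 (S₁.erase 1) := (insert_erase h₁.1.2).symm
            _ = insert 1 (S₂.erase 1) := congrArg (insert 1) he
            _ = S₂ := insert_erase h₂.1.2
        · intro T hT
          rw [mem_coe, mem_powersetCard] at hT
          have h1T : (1 : ℕ) ∉ T := by
            intro h
            have := hT.1 h
            rw [mem_Icc] at this
            omega
          refine ⟨insert 1 T, ?_, ?_⟩
          · simp only [mem_coe, mem_filter, mem_powerset]
            refine ⟨⟨?_, mem_insert_self 1 T⟩, ?_⟩
            · intro x hx
              rcases mem_insert.1 hx with rfl | hx
              · rw [mem_Icc]; omega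
              · have := hT.1 hx
                rw [mem_Icc] at this ⊢
                omega
            · rw [card_insert_of_notMem h1T, hT.2]; omega
          · exact erase_insert h1T
      rw [hbij, card_powersetCard, Nat.card_Icc]
      have h2 : n + 1 - 2 = n - 1 := by omega
      rw [h2]
    rw [hN]
    have hn0 : 0 < n := hn
    set f : ℕ → Fin n := fun x => ⟨(x - 1) % n, Nat.mod_lt _ hn0⟩ with hf
    have hfinj : ∀ x ∈ Icc 1 n, ∀ y ∈ Icc 1 n, f x = f y → x = y := by
      intro x hx y hy he
      rw [mem_Icc] at hx hy
      have h1 : (x - 1) % n = x - 1 := Nat.mod_eq_of_lt (by omega)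
      have h2 : (y - 1) % n = y - 1 := Nat.mod_eq_of_lt (by omega)
      have hv := congrArg Fin.val he
      simp only [hf] at hv
      rw [h1, h2] at hv
      omega
    set ℬ := (𝒜.filter (fun S => S.card = k)).image (fun A => A.image f) with hℬ
    have hcard : ℬ.card = lvl 𝒜 k := by
      rw [hℬ]
      apply card_image_of_injOn
      intro A hA B hB he
      simp only [mem_coe] at hA hB
      have he' : A.image f = B.image f := he
      have hA' : A ⊆ Icc 1 n := h𝒜 A (mem_filter.1 hA).1
      have hB' : B ⊆ Icc 1 n := h𝒜 B (mem_filter.1 hB).1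
      apply Finset.Subset.antisymm
      · intro x hx
        have : f x ∈ B.image f := by rw [← he']; exact mem_image_of_mem f hx
        obtain ⟨y, hy, hxy⟩ := mem_image.1 this
        rwa [← hfinj y (hB' hy) x (hA' hx) hxy]
      · intro x hx
        have : f x ∈ A.image f := by rw [he']; exact mem_image_of_mem f hx
        obtain ⟨y, hy, hxy⟩ := mem_image.1 this
        rwa [← hfinj y (hA' hy) x (hB' hx) hxy]
    have hsized : (↑ℬ : Set (Finset (Fin n))).Sized k := by
      intro u hu
      rw [hℬ, coe_image] at hu
      obtain ⟨A, hA, rfl⟩ := hu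
      simp only [mem_coe] at hA
      have hA' : A ⊆ Icc 1 n := h𝒜 A (mem_filter.1 hA).1
      rw [card_image_of_injOn (fun x hx y hy => hfinj x (hA' hx) y (hA' hy))]
      exact (mem_filter.1 hA).2
    have hints : (↑ℬ : Set (Finset (Fin n))).Intersecting := by
      intro u hu v hv
      rw [hℬ, coe_image] at hu hv
      obtain ⟨A, hA, rfl⟩ := hu
      obtain ⟨B, hB, rfl⟩ := hv
      simp only [mem_coe] at hA hB
      obtain ⟨x, hx⟩ := hint A (mem_filter.1 hA).1 B (mem_filter.1 hB).1
      rw [mem_inter] at hx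
      rw [Finset.disjoint_left]
      intro hd
      exact hd (mem_image_of_mem f hx.1) (mem_image_of_mem f hx.2)
    have hekr := Finset.erdos_ko_rado hints hsized (by omega : k ≤ n / 2)
    omega

/-- **Theorem (Borg).** If `𝒜` and `ℬ` are non-empty cross-intersecting families of
subsets of `[n] = {1, …, n}`, `𝒜` is intersecting, and `a₀, …, aₙ, b₀, …, bₙ` are
non-negative reals with `aᵢ + bᵢ ≥ a_{n-i} + b_{n-i}` and `a_{n-i} ≥ bᵢ` for each
`i ≤ n/2`, then
`∑_{A ∈ 𝒜} a_{|A|} + ∑_{B ∈ ℬ} b_{|B|} ≤ ∑_{S ∈ 𝒮ₙ} a_{|S|} + ∑_{S ∈ 𝒮ₙ} b_{|S|}`,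
where `𝒮ₙ = {S ⊆ [n] : 1 ∈ S}`. -/
theorem weighted_cross_intersecting
    (n : ℕ) (hn : 1 ≤ n)
    (𝒜 ℬ : Finset (Finset ℕ))
    (h𝒜sub : ∀ A ∈ 𝒜, A ⊆ Finset.Icc 1 n)
    (hℬsub : ∀ B ∈ ℬ, B ⊆ Finset.Icc 1 n)
    (h𝒜ne : 𝒜.Nonempty) (hℬne : ℬ.Nonempty)
    (hcross : ∀ A ∈ 𝒜, ∀ B ∈ ℬ, (A ∩ B).Nonempty)
    (hint : ∀ A ∈ 𝒜, ∀ A' ∈ 𝒜, (A ∩ A').Nonempty)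
    (a b : ℕ → ℝ)
    (ha : ∀ i ≤ n, 0 ≤ a i) (hb : ∀ i ≤ n, 0 ≤ b i)
    (hab : ∀ i, 2 * i ≤ n → a (n - i) + b (n - i) ≤ a i + b i)
    (hba : ∀ i, 2 * i ≤ n → b i ≤ a (n - i)) :
    ∑ A ∈ 𝒜, a A.card + ∑ B ∈ ℬ, b B.card ≤
      ∑ S ∈ (Finset.Icc 1 n).powerset.filter (fun S => 1 ∈ S), a S.card +
        ∑ S ∈ (Finset.Icc 1 n).powerset.filter (fun S => 1 ∈ S), b S.card := by
  classical
  have hUcard : (Icc 1 n).card = n := by rw [Nat.card_Icc]; omega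
  have h𝒮sub : ∀ S ∈ (Icc 1 n).powerset.filter (fun S => 1 ∈ S), S ⊆ Icc 1 n :=
    fun S hS => mem_powerset.1 (mem_filter.1 hS).1
  -- fiberwise decomposition of the sums by cardinality
  have fib : ∀ (𝒞 : Finset (Finset ℕ)), (∀ C ∈ 𝒞, C ⊆ Icc 1 n) → ∀ w : ℕ → ℝ,
      ∑ S ∈ 𝒞, w S.card = ∑ k ∈ Finset.range (n + 1), (lvl 𝒞 k : ℝ) * w k := by
    intro 𝒞 hsub w
    rw [← Finset.sum_fiberwise_of_maps_to (g := Finset.card) (t := Finset.range (n + 1))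
        (fun S hS => Finset.mem_range.2 (Nat.lt_succ_of_le
          (le_trans (Finset.card_le_card (hsub S hS)) (le_of_eq hUcard)))) (fun S => w S.card)]
    refine Finset.sum_congr rfl fun k _ => ?_
    rw [Finset.sum_congr rfl (fun S hS => by rw [(Finset.mem_filter.1 hS).2]),
      Finset.sum_const, nsmul_eq_mul]
    rfl
  -- the key inequality for a pair of levels k, n-k with 2k ≤ n
  have key : ∀ k, k ≤ n → 2 * k ≤ n →
      ((lvl 𝒜 k : ℝ) * a k + (lvl ℬ k : ℝ) * b k)
        + ((lvl 𝒜 (n - k) : ℝ) * a (n - k) + (lvl ℬ (n - k) : ℝ) * b (n - k)) ≤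
      ((lvl ((Icc 1 n).powerset.filter (fun S => 1 ∈ S)) k : ℝ) * a k
          + (lvl ((Icc 1 n).powerset.filter (fun S => 1 ∈ S)) k : ℝ) * b k)
        + ((lvl ((Icc 1 n).powerset.filter (fun S => 1 ∈ S)) (n - k) : ℝ) * a (n - k)
          + (lvl ((Icc 1 n).powerset.filter (fun S => 1 ∈ S)) (n - k) : ℝ) * b (n - k)) := by
    intro k hk hk2
    set 𝒮 := (Icc 1 n).powerset.filter (fun S => 1 ∈ S) with h𝒮
    have hlevel := borg_level_count n k hn hk
    have E1 : (lvl 𝒜 k : ℝ) ≤ (lvl 𝒮 k : ℝ) := by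
      exact_mod_cast borg_ekr n k hn hk2 𝒜 h𝒜sub hint
    have E4 : (lvl 𝒜 k : ℝ) + (lvl 𝒜 (n - k) : ℝ) ≤ (lvl 𝒮 k : ℝ) + (lvl 𝒮 (n - k) : ℝ) := by
      have := borg_cross_count n k hk 𝒜 𝒜 h𝒜sub h𝒜sub hint
      rw [hlevel] at this
      exact_mod_cast this
    have E2 : (lvl 𝒜 k : ℝ) + (lvl ℬ (n - k) : ℝ) ≤ (lvl 𝒮 k : ℝ) + (lvl 𝒮 (n - k) : ℝ) := by
      have := borg_cross_count n k hk 𝒜 ℬ h𝒜sub hℬsub hcross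
      rw [hlevel] at this
      exact_mod_cast this
    have E3 : (lvl ℬ k : ℝ) + (lvl 𝒜 (n - k) : ℝ) ≤ (lvl 𝒮 k : ℝ) + (lvl 𝒮 (n - k) : ℝ) := by
      have := borg_cross_count n k hk ℬ 𝒜 hℬsub h𝒜sub
        (fun C hC D hD => by rw [Finset.inter_comm]; exact hcross D hD C hC)
      rw [hlevel] at this
      exact_mod_cast this
    have l1 : (0 : ℝ) ≤ a k + b k - a (n - k) - b (n - k) := by
      have := hab k hk2; linarith
    have l4 : (0 : ℝ) ≤ a (n - k) - b k := by
      have := hba k hk2; linarith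
    have hbk : (0 : ℝ) ≤ b k := hb k hk
    have hbnk : (0 : ℝ) ≤ b (n - k) := hb (n - k) (by omega)
    nlinarith [mul_le_mul_of_nonneg_left E1 l1, mul_le_mul_of_nonneg_left E2 hbnk,
      mul_le_mul_of_nonneg_left E3 hbk, mul_le_mul_of_nonneg_left E4 l4]
  -- extend to all k ≤ n by symmetry
  have key' : ∀ k, k ≤ n →
      ((lvl 𝒜 k : ℝ) * a k + (lvl ℬ k : ℝ) * b k)
        + ((lvl 𝒜 (n - k) : ℝ) * a (n - k) + (lvl ℬ (n - k) : ℝ) * b (n - k)) ≤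
      ((lvl ((Icc 1 n).powerset.filter (fun S => 1 ∈ S)) k : ℝ) * a k
          + (lvl ((Icc 1 n).powerset.filter (fun S => 1 ∈ S)) k : ℝ) * b k)
        + ((lvl ((Icc 1 n).powerset.filter (fun S => 1 ∈ S)) (n - k) : ℝ) * a (n - k)
          + (lvl ((Icc 1 n).powerset.filter (fun S => 1 ∈ S)) (n - k) : ℝ) * b (n - k)) := by
    intro k hk
    rcases le_or_gt (2 * k) n with h | h
    · exact key k hk h
    · have h1 : n - (n - k) = k := by omega
      have := key (n - k) (by omega) (by omega)
      rw [h1] at this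
      linarith
  -- reflection identity for sums over range (n+1)
  have refl : ∀ F : ℕ → ℝ,
      ∑ k ∈ Finset.range (n + 1), F (n - k) = ∑ k ∈ Finset.range (n + 1), F k := by
    intro F
    have := Finset.sum_range_reflect F (n + 1)
    simpa using this
  -- combine
  have doub : ∀ F : ℕ → ℝ,
      ∑ k ∈ Finset.range (n + 1), (F k + F (n - k))
        = 2 * ∑ k ∈ Finset.range (n + 1), F k := by
    intro F
    rw [Finset.sum_add_distrib, refl F]
    ring
  have main : ∑ k ∈ Finset.range (n + 1), ((lvl 𝒜 k : ℝ) * a k + (lvl ℬ k : ℝ) * b k) ≤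
      ∑ k ∈ Finset.range (n + 1),
        ((lvl ((Icc 1 n).powerset.filter (fun S => 1 ∈ S)) k : ℝ) * a k
          + (lvl ((Icc 1 n).powerset.filter (fun S => 1 ∈ S)) k : ℝ) * b k) := by
    have htwice : (2 : ℝ) * ∑ k ∈ Finset.range (n + 1),
          ((lvl 𝒜 k : ℝ) * a k + (lvl ℬ k : ℝ) * b k) ≤
        2 * ∑ k ∈ Finset.range (n + 1),
          ((lvl ((Icc 1 n).powerset.filter (fun S => 1 ∈ S)) k : ℝ) * a k
            + (lvl ((Icc 1 n).powerset.filter (fun S => 1 ∈ S)) k : ℝ) * b k) := by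
      rw [← doub (fun k => (lvl 𝒜 k : ℝ) * a k + (lvl ℬ k : ℝ) * b k),
        ← doub (fun k => (lvl ((Icc 1 n).powerset.filter (fun S => 1 ∈ S)) k : ℝ) * a k
          + (lvl ((Icc 1 n).powerset.filter (fun S => 1 ∈ S)) k : ℝ) * b k)]
      exact Finset.sum_le_sum (fun k hk => key' k (by rw [Finset.mem_range] at hk; omega))
    linarith
  calc ∑ A ∈ 𝒜, a A.card + ∑ B ∈ ℬ, b B.card
      = ∑ k ∈ Finset.range (n + 1), ((lvl 𝒜 k : ℝ) * a k + (lvl ℬ k : ℝ) * b k) := by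
        rw [fib 𝒜 h𝒜sub a, fib ℬ hℬsub b, Finset.sum_add_distrib]
    _ ≤ ∑ k ∈ Finset.range (n + 1),
          ((lvl ((Icc 1 n).powerset.filter (fun S => 1 ∈ S)) k : ℝ) * a k
            + (lvl ((Icc 1 n).powerset.filter (fun S => 1 ∈ S)) k : ℝ) * b k) := main
    _ = _ := by
        rw [Finset.sum_add_distrib, ← fib _ h𝒮sub a, ← fib _ h𝒮sub b]
end

section
/- Let n and r be positive integers with n ≥ 2r − 1, and let T_n be the depth-two claw with n leaves: the graph with vertex set {x_0} ∪ {x_1, ..., x_n} ∪ {y_1, ..., y_n} (2n+1 distinct vertices) and edge set {x_0 y_i : i ∈ [n]} ∪ {x_i y_i : i ∈ [n]}. Then every intersecting family of r-element independent sets of T_n has size at most the number of r-element independent sets of T_n that contain the vertex x_1. -/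
/-- The depth-two claw `Tₙ`: vertices are encoded as pairs of naturals, with
`x₀ = (0,0)`, `xᵢ = (i,1)` and `yᵢ = (i,2)` for `i ∈ [n]`; the edges are
`x₀yᵢ` and `xᵢyᵢ` for `i ∈ [n]`. -/
def depthTwoClaw (n : ℕ) : SimpleGraph (ℕ × ℕ) :=
  SimpleGraph.fromEdgeSet
    {e | ∃ i ∈ Finset.Icc 1 n, e = s(((0 : ℕ), (0 : ℕ)), (i, 2)) ∨ e = s((i, 1), (i, 2))}

/-- The vertex set of the depth-two claw `Tₙ`. -/
def depthTwoClawVerts (n : ℕ) : Finset (ℕ × ℕ) :=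
  insert ((0 : ℕ), (0 : ℕ)) ((Finset.Icc 1 n) ×ˢ ({1, 2} : Finset ℕ))

open Classical in
/-- The family of `r`-element independent sets of the depth-two claw `Tₙ`. -/
noncomputable def depthTwoClawIndep (n r : ℕ) : Finset (Finset (ℕ × ℕ)) :=
  (depthTwoClawVerts n).powerset.filter
    (fun I => I.card = r ∧ ∀ u ∈ I, ∀ v ∈ I, ¬ (depthTwoClaw n).Adj u v)



open Finset

namespace FJT






variable {α : Type*} [DecidableEq α]

/-! ### Generic single-element compression -/

/-- replace `b` by `a` in the set `A` -/
def mv (a b : α) (A : Finset α) : Finset α := insert a (A.erase b)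

lemma card_mv {a b : α} {A : Finset α} (hb : b ∈ A) (ha : a ∉ A) :
    (mv a b A).card = A.card := by
  have h1 : a ∉ A.erase b := fun h => ha (mem_of_mem_erase h)
  have h2 := card_pos.mpr ⟨b, hb⟩
  rw [mv, card_insert_of_notMem h1, card_erase_of_mem hb]
  omega

lemma not_mem_mv {a b : α} (hab : a ≠ b) (A : Finset α) : b ∉ mv a b A := by
  simp [mv, hab, Ne.symm hab]

lemma mem_mv_iff {a b x : α} {A : Finset α} : x ∈ mv a b A ↔ x = a ∨ (x ∈ A ∧ x ≠ b) := by
  simp only [mv, mem_insert, mem_erase]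
  tauto

lemma mem_mv_of_mem {a b x : α} {A : Finset α} (hx : x ∈ A) (hxb : x ≠ b) : x ∈ mv a b A :=
  mem_mv_iff.2 (Or.inr ⟨hx, hxb⟩)

lemma a_mem_mv {a b : α} {A : Finset α} : a ∈ mv a b A := mem_insert_self _ _

lemma mv_inv {a b : α} {A : Finset α} (hb : b ∈ A) (ha : a ∉ A) :
    insert b ((mv a b A).erase a) = A := by
  have h1 : a ∉ A.erase b := fun h => ha (mem_of_mem_erase h)
  rw [mv, erase_insert h1, insert_erase hb]

/-- compression step: move `A` to `mv a b A` when possible and not already present -/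
def fmv (a b : α) (𝒜 : Finset (Finset α)) (A : Finset α) : Finset α :=
  if b ∈ A ∧ a ∉ A ∧ mv a b A ∉ 𝒜 then mv a b A else A

def comp (a b : α) (𝒜 : Finset (Finset α)) : Finset (Finset α) :=
  𝒜.image (fmv a b 𝒜)

lemma fmv_injOn {a b : α} (hab : a ≠ b) (𝒜 : Finset (Finset α)) :
    Set.InjOn (fmv a b 𝒜) ↑𝒜 := by
  intro A hA B hB h
  unfold fmv at h
  by_cases cA : b ∈ A ∧ a ∉ A ∧ mv a b A ∉ 𝒜 <;>
    by_cases cB : b ∈ B ∧ a ∉ B ∧ mv a b B ∉ 𝒜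
  · rw [if_pos cA, if_pos cB] at h
    rw [← mv_inv cA.1 cA.2.1, ← mv_inv cB.1 cB.2.1, h]
  · rw [if_pos cA, if_neg cB] at h
    exact absurd (h ▸ hB) cA.2.2
  · rw [if_neg cA, if_pos cB] at h
    exact absurd (h.symm ▸ hA) cB.2.2
  · rw [if_neg cA, if_neg cB] at h
    exact h

lemma card_comp {a b : α} (hab : a ≠ b) (𝒜 : Finset (Finset α)) :
    (comp a b 𝒜).card = 𝒜.card :=
  card_image_of_injOn (fmv_injOn hab 𝒜)

lemma sum_comp {a b : α} (hab : a ≠ b) (𝒜 : Finset (Finset α)) (g : Finset α → ℕ)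
    (hg : ∀ A ∈ 𝒜, b ∈ A → a ∉ A → g (mv a b A) = g A) :
    ∑ C ∈ comp a b 𝒜, g C = ∑ A ∈ 𝒜, g A := by
  rw [comp, sum_image (fun x hx y hy => fmv_injOn hab 𝒜 hx hy)]
  refine sum_congr rfl fun A hA => ?_
  by_cases c : b ∈ A ∧ a ∉ A ∧ mv a b A ∉ 𝒜
  · rw [fmv, if_pos c, hg A hA c.1 c.2.1]
  · rw [fmv, if_neg c]

lemma mem_comp_cases {a b : α} {𝒜 : Finset (Finset α)} {C : Finset α} (hC : C ∈ comp a b 𝒜) :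
    (C ∈ 𝒜 ∧ ¬(b ∈ C ∧ a ∉ C ∧ mv a b C ∉ 𝒜)) ∨
      ∃ A ∈ 𝒜, b ∈ A ∧ a ∉ A ∧ mv a b A ∉ 𝒜 ∧ C = mv a b A := by
  obtain ⟨A, hA, rfl⟩ := mem_image.1 hC
  by_cases c : b ∈ A ∧ a ∉ A ∧ mv a b A ∉ 𝒜
  · exact Or.inr ⟨A, hA, c.1, c.2.1, c.2.2, by rw [fmv, if_pos c]⟩
  · rw [fmv, if_neg c]; exact Or.inl ⟨hA, c⟩

lemma comp_inter {a b : α} (hab : a ≠ b) {𝒜 : Finset (Finset α)}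
    (h : ∀ A ∈ 𝒜, ∀ B ∈ 𝒜, (A ∩ B).Nonempty) :
    ∀ C ∈ comp a b 𝒜, ∀ D ∈ comp a b 𝒜, (C ∩ D).Nonempty := by
  -- key asymmetric case
  have key : ∀ A ∈ 𝒜, ∀ B ∈ 𝒜, (b ∈ A ∧ a ∉ A ∧ mv a b A ∉ 𝒜) →
      ¬(b ∈ B ∧ a ∉ B ∧ mv a b B ∉ 𝒜) → (mv a b A ∩ B).Nonempty := by
    intro A hA B hB cA cB
    by_cases hx : ∃ x ∈ A ∩ B, x ≠ b
    · obtain ⟨x, hxAB, hxb⟩ := hx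
      obtain ⟨hxA, hxB⟩ := mem_inter.1 hxAB
      exact ⟨x, mem_inter.2 ⟨mem_mv_of_mem hxA hxb, hxB⟩⟩
    · push_neg at hx
      obtain ⟨y, hy⟩ := h A hA B hB
      have hyb : y = b := hx y hy
      obtain ⟨hbA, hbB⟩ := mem_inter.1 hy
      rw [hyb] at hbA hbB
      by_cases haB : a ∈ B
      · exact ⟨a, mem_inter.2 ⟨a_mem_mv, haB⟩⟩
      · have hmvB : mv a b B ∈ 𝒜 := by
          by_contra hm; exact cB ⟨hbB, haB, hm⟩
        obtain ⟨z, hz⟩ := h A hA (mv a b B) hmvB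
        obtain ⟨hzA, hzB⟩ := mem_inter.1 hz
        rcases mem_mv_iff.1 hzB with rfl | ⟨hzB', hzb⟩
        · exact absurd hzA cA.2.1
        · exact absurd hzb (by simpa using hx z (mem_inter.2 ⟨hzA, hzB'⟩))
  intro C hC D hD
  rcases mem_comp_cases hC with ⟨hC', hCn⟩ | ⟨A, hA, cA1, cA2, cA3, rfl⟩ <;>
    rcases mem_comp_cases hD with ⟨hD', hDn⟩ | ⟨B, hB, cB1, cB2, cB3, rfl⟩
  · exact h C hC' D hD'
  · obtain ⟨x, hx⟩ := key B hB C hC' ⟨cB1, cB2, cB3⟩ hCn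
    exact ⟨x, by rw [inter_comm]; exact hx⟩
  · exact key A hA D hD' ⟨cA1, cA2, cA3⟩ hDn
  · exact ⟨a, mem_inter.2 ⟨a_mem_mv, a_mem_mv⟩⟩

lemma comp_eq_closure {a b : α} {𝒜 : Finset (Finset α)} (h : comp a b 𝒜 = 𝒜) :
    ∀ A ∈ 𝒜, b ∈ A → a ∉ A → mv a b A ∈ 𝒜 := by
  intro A hA hb ha
  by_contra hm
  have h1 : fmv a b 𝒜 A ∈ comp a b 𝒜 := mem_image_of_mem _ hA
  rw [h, fmv, if_pos ⟨hb, ha, hm⟩] at h1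
  exact hm h1

lemma comp_measure {a b : α} (hab : a ≠ b) (𝒜 : Finset (Finset α)) (g : Finset α → ℕ)
    (hg : ∀ A, b ∈ A → a ∉ A → g (mv a b A) < g A) :
    comp a b 𝒜 = 𝒜 ∨ ∑ C ∈ comp a b 𝒜, g C < ∑ A ∈ 𝒜, g A := by
  by_cases hc : ∀ A ∈ 𝒜, ¬(b ∈ A ∧ a ∉ A ∧ mv a b A ∉ 𝒜)
  · left
    rw [comp]
    have h1 : ∀ A ∈ 𝒜, fmv a b 𝒜 A = A := fun A hA => if_neg (hc A hA)
    rw [image_congr h1]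
    simp
  · right
    push_neg at hc
    obtain ⟨A₀, hA₀, hcond⟩ := hc
    rw [comp, sum_image (fun x hx y hy => fmv_injOn hab 𝒜 hx hy)]
    refine sum_lt_sum (fun A hA => ?_) ⟨A₀, hA₀, ?_⟩
    · by_cases c : b ∈ A ∧ a ∉ A ∧ mv a b A ∉ 𝒜
      · rw [fmv, if_pos c]; exact (hg A c.1 c.2.1).le
      · rw [fmv, if_neg c]
    · rw [fmv, if_pos hcond]; exact hg A₀ hcond.1 hcond.2.1








/-! ### Counting lemmas -/

/-- number of `r`-subsets of `G` containing a fixed `V ⊆ G` -/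
lemma card_supersets {G V : Finset ℕ} {r : ℕ} (hVG : V ⊆ G) (hVr : V.card ≤ r) :
    ((G.powersetCard r).filter (fun S => V ⊆ S)).card
      = (G.card - V.card).choose (r - V.card) := by
  rw [← card_sdiff_of_subset hVG, ← card_powersetCard]
  apply card_bij (fun S _ => S \ V)
  · intro S hS
    simp only [mem_filter, mem_powersetCard] at hS
    simp only [mem_powersetCard]
    exact ⟨sdiff_subset_sdiff hS.1.1 (le_refl _), by rw [card_sdiff_of_subset hS.2, hS.1.2]⟩
  · intro S hS S' hS' h
    simp only [mem_filter, mem_powersetCard] at hS hS'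
    rw [← sdiff_union_of_subset hS.2, ← sdiff_union_of_subset hS'.2, h]
  · intro T hT
    simp only [mem_powersetCard] at hT
    have hdisj : Disjoint T V := disjoint_of_subset_left hT.1 sdiff_disjoint
    refine ⟨T ∪ V, ?_, ?_⟩
    · simp only [mem_filter, mem_powersetCard]
      refine ⟨⟨union_subset (hT.1.trans sdiff_subset) hVG, ?_⟩, subset_union_right⟩
      rw [card_union_of_disjoint hdisj, hT.2]
      omega
    · rw [union_sdiff_right, sdiff_eq_self_of_disjoint hdisj]

/-- number of subsets of `S` containing a fixed element `a ∈ S` -/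
lemma card_mem_powerset {S : Finset ℕ} {a : ℕ} (ha : a ∈ S) :
    ((S.powerset).filter (fun V => a ∈ V)).card = 2 ^ (S.card - 1) := by
  rw [← card_erase_of_mem ha, ← card_powerset]
  apply card_bij (fun V _ => V.erase a)
  · intro V hV
    simp only [mem_filter, mem_powerset] at hV
    simp only [mem_powerset]
    exact erase_subset_erase _ hV.1
  · intro V hV V' hV' h
    simp only [mem_filter, mem_powerset] at hV hV'
    rw [← insert_erase hV.2, ← insert_erase hV'.2, h]
  · intro W hW
    simp only [mem_powerset] at hW
    have haW : a ∉ W := fun h => (mem_erase.1 (hW h)).1 rfl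
    refine ⟨insert a W, ?_, ?_⟩
    · simp only [mem_filter, mem_powerset]
      exact ⟨insert_subset ha (hW.trans (erase_subset _ _)), mem_insert_self _ _⟩
    · rw [erase_insert haW]

/-- number of `k`-subsets of `G` containing a fixed element `a ∈ G` -/
lemma card_mem_powersetCard {G : Finset ℕ} {a k : ℕ} (ha : a ∈ G) (hk : 1 ≤ k) :
    ((G.powersetCard k).filter (fun V => a ∈ V)).card
      = (G.card - 1).choose (k - 1) := by
  rw [← card_erase_of_mem ha, ← card_powersetCard]
  apply card_bij (fun V _ => V.erase a)
  · intro V hV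
    simp only [mem_filter, mem_powersetCard] at hV
    simp only [mem_powersetCard]
    exact ⟨erase_subset_erase _ hV.1.1, by rw [card_erase_of_mem hV.2, hV.1.2]⟩
  · intro V hV V' hV' h
    simp only [mem_filter, mem_powersetCard] at hV hV'
    rw [← insert_erase hV.2, ← insert_erase hV'.2, h]
  · intro W hW
    simp only [mem_powersetCard] at hW
    have haW : a ∉ W := fun h => (mem_erase.1 (hW.1 h)).1 rfl
    refine ⟨insert a W, ?_, ?_⟩
    · simp only [mem_filter, mem_powersetCard]
      refine ⟨⟨insert_subset ha (hW.1.trans (erase_subset _ _)), ?_⟩, mem_insert_self _ _⟩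
      rw [card_insert_of_notMem haW, hW.2]
      omega
    · rw [erase_insert haW]

/-- The star-weight identity, by double counting pairs `(V, S)` with `a ∈ V ⊆ S`. -/
lemma star_ident {G : Finset ℕ} {a r : ℕ} (ha : a ∈ G) (hr : 1 ≤ r) (hrn : r ≤ G.card) :
    ∑ V ∈ (G.powerset).filter (fun V => a ∈ V ∧ V.card ≤ r),
        (G.card - V.card).choose (r - V.card)
      = 2 ^ (r - 1) * (G.card - 1).choose (r - 1) := by
  classical
  set P := ((G.powerset) ×ˢ (G.powersetCard r)).filter (fun p => a ∈ p.1 ∧ p.1 ⊆ p.2) with hP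
  have h1 : P.card = ∑ V ∈ (G.powerset).filter (fun V => a ∈ V ∧ V.card ≤ r),
      (G.card - V.card).choose (r - V.card) := by
    rw [card_eq_sum_card_fiberwise (f := Prod.fst)
      (t := (G.powerset).filter (fun V => a ∈ V ∧ V.card ≤ r))]
    · refine sum_congr rfl fun V hV => ?_
      simp only [mem_filter, mem_powerset] at hV
      rw [← card_supersets hV.1 hV.2.2]
      apply card_bij (fun p _ => p.2)
      · intro p hp
        simp only [mem_filter, mem_product, hP] at hp
        simp only [mem_filter]
        exact ⟨hp.1.1.2, hp.2 ▸ hp.1.2.2⟩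
      · intro p hp q hq h
        simp only [mem_filter, hP] at hp hq
        exact Prod.ext (hp.2.trans hq.2.symm) h
      · intro S hS
        simp only [mem_filter] at hS
        refine ⟨(V, S), ?_, rfl⟩
        simp only [mem_filter, mem_product, mem_powerset, hP]
        exact ⟨⟨⟨hV.1, hS.1⟩, ⟨hV.2.1, hS.2⟩⟩, trivial⟩
    · intro p hp
      simp only [mem_coe, mem_filter, mem_product, mem_powerset, mem_powersetCard, hP] at hp
      simp only [mem_coe, mem_filter, mem_powerset]
      exact ⟨hp.1.1, hp.2.1, (card_le_card hp.2.2).trans_eq hp.1.2.2⟩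
  have h2 : P.card = 2 ^ (r - 1) * (G.card - 1).choose (r - 1) := by
    rw [card_eq_sum_card_fiberwise (f := Prod.snd)
      (t := (G.powersetCard r).filter (fun S => a ∈ S))]
    · have hconst : ∀ S ∈ (G.powersetCard r).filter (fun S => a ∈ S),
          (P.filter (fun p => p.2 = S)).card = 2 ^ (r - 1) := by
        intro S hS
        simp only [mem_filter, mem_powersetCard] at hS
        have h2r : 2 ^ (r - 1) = 2 ^ (S.card - 1) := by rw [hS.1.2]
        rw [h2r, ← card_mem_powerset hS.2]
        apply card_bij (fun p _ => p.1)
        · intro p hp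
          simp only [mem_filter, mem_product, hP] at hp
          simp only [mem_filter, mem_powerset]
          exact ⟨hp.2 ▸ hp.1.2.2, hp.1.2.1⟩
        · intro p hp q hq h
          simp only [mem_filter, hP] at hp hq
          exact Prod.ext h (hp.2.trans hq.2.symm)
        · intro V hV
          simp only [mem_filter, mem_powerset] at hV
          refine ⟨(V, S), ?_, rfl⟩
          simp only [mem_filter, mem_product, mem_powerset, mem_powersetCard, hP]
          exact ⟨⟨⟨hV.1.trans hS.1.1, hS.1⟩, ⟨hV.2, hV.1⟩⟩, trivial⟩
      rw [sum_congr rfl hconst, sum_const, smul_eq_mul, card_mem_powersetCard ha hr, mul_comm]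
    · intro p hp
      simp only [mem_coe, mem_filter, mem_product, mem_powersetCard, hP] at hp
      simp only [mem_coe, mem_filter, mem_powersetCard]
      exact ⟨hp.1.2, hp.2.2 hp.2.1⟩
  rw [← h1, h2]

/-- sum-over-sizes version of the star identity -/
lemma star_ident_k {n r : ℕ} (hr : 1 ≤ r) (hrn : r ≤ n) :
    ∑ k ∈ Icc 1 r, (n - k).choose (r - k) * (n - 1).choose (k - 1)
      = 2 ^ (r - 1) * (n - 1).choose (r - 1) := by
  classical
  have hn : 1 ≤ n := hr.trans hrn
  have ha : (1 : ℕ) ∈ Icc 1 n := by simp [hn]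
  have hG : (Icc 1 n).card = n := by rw [Nat.card_Icc]; omega
  have key := star_ident (G := Icc 1 n) (a := 1) (r := r) ha hr (by rw [hG]; exact hrn)
  rw [hG] at key
  rw [← key]
  rw [← sum_fiberwise_of_maps_to (g := fun V : Finset ℕ => V.card) (t := Icc 1 r)
    (fun V hV => by
      simp only [mem_filter, mem_powerset] at hV
      simp only [mem_Icc]
      exact ⟨card_pos.mpr ⟨1, hV.2.1⟩, hV.2.2⟩)
    (fun V => (n - V.card).choose (r - V.card))]
  refine sum_congr rfl fun k hk => ?_
  simp only [mem_Icc] at hk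
  have hset : ((Icc 1 n).powerset.filter (fun V => 1 ∈ V ∧ V.card ≤ r)).filter
      (fun V => V.card = k) = ((Icc 1 n).powersetCard k).filter (fun V => 1 ∈ V) := by
    ext V
    simp only [mem_filter, mem_powerset, mem_powersetCard]
    constructor
    · rintro ⟨⟨h1, h2, h3⟩, h4⟩
      exact ⟨⟨h1, h4⟩, h2⟩
    · rintro ⟨⟨h1, h4⟩, h2⟩
      exact ⟨⟨h1, h2, h4 ▸ hk.2⟩, h4⟩
  have hsum : ∀ V ∈ ((Icc 1 n).powerset.filter (fun V => 1 ∈ V ∧ V.card ≤ r)).filter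
      (fun V => V.card = k), (n - V.card).choose (r - V.card) = (n - k).choose (r - k) := by
    intro V hV
    simp only [mem_filter] at hV
    rw [hV.2]
  rw [sum_congr rfl hsum, sum_const, smul_eq_mul, hset, card_mem_powersetCard ha hk.1, hG,
    mul_comm]








/-! ### Erdős–Ko–Rado on subsets of `Icc 1 n ⊆ ℕ` -/

lemma ekr_nat {n k : ℕ} (hk : 1 ≤ k) (hkn : 2 * k ≤ n) {𝒜 : Finset (Finset ℕ)}
    (hsub : ∀ A ∈ 𝒜, A ⊆ Icc 1 n) (hsized : ∀ A ∈ 𝒜, A.card = k)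
    (hint : ∀ A ∈ 𝒜, ∀ B ∈ 𝒜, (A ∩ B).Nonempty) :
    𝒜.card ≤ (n - 1).choose (k - 1) := by
  classical
  have hn : 0 < n := by omega
  set f : ℕ → Fin n := fun x => ⟨(x - 1) % n, Nat.mod_lt _ hn⟩ with hf
  have hfinj : ∀ x ∈ Icc 1 n, ∀ y ∈ Icc 1 n, f x = f y → x = y := by
    intro x hx y hy hxy
    simp only [mem_Icc] at hx hy
    have hx' : x - 1 < n := by omega
    have hy' : y - 1 < n := by omega
    have : (x - 1) % n = (y - 1) % n := congrArg Fin.val hxy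
    rw [Nat.mod_eq_of_lt hx', Nat.mod_eq_of_lt hy'] at this
    omega
  set F : Finset ℕ → Finset (Fin n) := fun A => A.image f with hF
  have hFcard : ∀ A ∈ 𝒜, (F A).card = A.card := fun A hA =>
    card_image_of_injOn (fun x hx y hy => hfinj x (hsub A hA hx) y (hsub A hA hy))
  have hFinj : Set.InjOn F ↑𝒜 := by
    intro A hA B hB h
    ext x
    constructor
    · intro hx
      have : f x ∈ F B := h ▸ mem_image_of_mem f hx
      obtain ⟨y, hy, hxy⟩ := mem_image.1 this
      rwa [← hfinj y (hsub B hB hy) x (hsub A hA hx) hxy]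
    · intro hx
      have : f x ∈ F A := h ▸ mem_image_of_mem f hx
      obtain ⟨y, hy, hxy⟩ := mem_image.1 this
      rwa [← hfinj y (hsub A hA hy) x (hsub B hB hx) hxy]
  set ℬ : Finset (Finset (Fin n)) := 𝒜.image F with hB
  have hcard : ℬ.card = 𝒜.card := card_image_of_injOn hFinj
  have h1 : (↑ℬ : Set (Finset (Fin n))).Intersecting := by
    rintro C hC D hD
    simp only [hB, coe_image, Set.mem_image, mem_coe] at hC hD
    obtain ⟨A, hA, rfl⟩ := hC
    obtain ⟨B', hB', rfl⟩ := hD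
    obtain ⟨x, hx⟩ := hint A hA B' hB'
    obtain ⟨hxA, hxB⟩ := mem_inter.1 hx
    rw [Finset.disjoint_left]
    push_neg
    exact ⟨f x, mem_image_of_mem f hxA, mem_image_of_mem f hxB⟩
  have h2 : (↑ℬ : Set (Finset (Fin n))).Sized k := by
    rintro C hC
    simp only [hB, coe_image, Set.mem_image, mem_coe] at hC
    obtain ⟨A, hA, rfl⟩ := hC
    rw [hFcard A hA]
    exact hsized A hA
  have h3 : k ≤ n / 2 := by omega
  have := Finset.erdos_ko_rado h1 h2 h3
  omega








def pureOK (n r : ℕ) (V : Finset ℕ) : Prop := V ⊆ Icc 1 n ∧ 1 ≤ V.card ∧ V.card ≤ r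
def zeroOK (n r : ℕ) (V : Finset ℕ) : Prop := 0 ∈ V ∧ V ⊆ insert 0 (Icc 1 n) ∧ V.card = r
def wt (n r : ℕ) (V : Finset ℕ) : ℕ := if 0 ∈ V then 1 else (n - V.card).choose (r - V.card)
def B2 (n r : ℕ) : ℕ := 2 ^ (r - 1) * (n - 1).choose (r - 1)
def B1 (n r : ℕ) : ℕ := B2 n r + (if 2 ≤ r then (n - 1).choose (r - 2) else 0)

lemma zero_not_mem_Icc {n x : ℕ} (hx : x ∈ Icc 1 n) : x ≠ 0 := by
  simp only [mem_Icc] at hx; omega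

lemma zmem {n r : ℕ} {V : Finset ℕ} (hs : pureOK n r V ∨ zeroOK n r V) (h0 : 0 ∈ V) :
    zeroOK n r V := by
  rcases hs with h | h
  · exact absurd rfl (zero_not_mem_Icc (h.1 h0))
  · exact h

lemma pmem {n r : ℕ} {V : Finset ℕ} (hs : pureOK n r V ∨ zeroOK n r V) (h0 : 0 ∉ V) :
    pureOK n r V := by
  rcases hs with h | h
  · exact h
  · exact absurd h.1 h0

lemma card_le_of_shape {n r : ℕ} {V : Finset ℕ} (hs : pureOK n r V ∨ zeroOK n r V) :
    V.card ≤ r := by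
  rcases hs with h | h
  · exact h.2.2
  · exact h.2.2.le

/-- splitting the sum into the pure part and the zero part -/
lemma sum_split {n r : ℕ} (𝒱 : Finset (Finset ℕ)) :
    ∑ V ∈ 𝒱, wt n r V
      = (∑ V ∈ 𝒱.filter (fun V => 0 ∉ V), (n - V.card).choose (r - V.card))
        + (𝒱.filter (fun V => 0 ∈ V)).card := by
  classical
  rw [← sum_filter_add_sum_filter_not 𝒱 (fun V => 0 ∈ V) (wt n r)]
  rw [add_comm]
  congr 1
  · refine sum_congr rfl fun V hV => ?_
    simp only [mem_filter] at hV
    rw [wt, if_neg hV.2]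
  · rw [card_eq_sum_ones]
    refine sum_congr rfl fun V hV => ?_
    simp only [mem_filter] at hV
    rw [wt, if_pos hV.2]

/-- bound on the number of zero-sets all containing a fixed `a ∈ [1, n]` -/
lemma zcard_bound {n r : ℕ} {𝒱 : Finset (Finset ℕ)} (hr2 : 2 ≤ r) (hrn : r ≤ n)
    (hshape : ∀ V ∈ 𝒱, pureOK n r V ∨ zeroOK n r V)
    {a : ℕ} (ha : a ∈ Icc 1 n) (hmem : ∀ V ∈ 𝒱, a ∈ V) :
    (𝒱.filter (fun V => 0 ∈ V)).card ≤ (n - 1).choose (r - 2) := by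
  classical
  set Z := 𝒱.filter (fun V => 0 ∈ V) with hZ
  have hsub : Z.image (fun V => V.erase 0)
      ⊆ ((Icc 1 n).powersetCard (r - 1)).filter (fun T => a ∈ T) := by
    intro T hT
    obtain ⟨V, hV, rfl⟩ := mem_image.1 hT
    simp only [hZ, mem_filter] at hV
    have hz := zmem (hshape V hV.1) hV.2
    simp only [mem_filter, mem_powersetCard]
    refine ⟨⟨fun x hx => ?_, ?_⟩, ?_⟩
    · obtain ⟨hx0, hxV⟩ := mem_erase.1 hx
      rcases mem_insert.1 (hz.2.1 hxV) with h | h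
      · exact absurd h hx0
      · exact h
    · rw [card_erase_of_mem hz.1, hz.2.2]
    · exact mem_erase.2 ⟨zero_not_mem_Icc ha, hmem V hV.1⟩
  have hinj : Set.InjOn (fun V : Finset ℕ => V.erase 0) ↑Z := by
    intro V hV W hW h
    simp only [hZ, coe_filter, Set.mem_setOf_eq] at hV hW
    rw [← insert_erase hV.2, ← insert_erase hW.2]
    simp only at h
    rw [h]
  calc Z.card = (Z.image (fun V => V.erase 0)).card := (card_image_of_injOn hinj).symm
    _ ≤ (((Icc 1 n).powersetCard (r - 1)).filter (fun T => a ∈ T)).card := card_le_card hsub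
    _ = (n - 1).choose (r - 2) := by
        rw [card_mem_powersetCard ha (by omega), Nat.card_Icc]
        congr 1 <;> omega

/-- the kernel case: every member contains a fixed element `a ∈ [1,n]` -/
lemma kernel_bound {n r : ℕ} {𝒱 : Finset (Finset ℕ)} (hr : 1 ≤ r) (hrn : r ≤ n)
    (hshape : ∀ V ∈ 𝒱, pureOK n r V ∨ zeroOK n r V)
    {a : ℕ} (ha : a ∈ Icc 1 n) (hmem : ∀ V ∈ 𝒱, a ∈ V) :
    ∑ V ∈ 𝒱, wt n r V ≤ B2 n r + (𝒱.filter (fun V => 0 ∈ V)).card := by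
  classical
  rw [sum_split]
  have hG : (Icc 1 n).card = n := by rw [Nat.card_Icc]; omega
  have hkey : ∑ V ∈ 𝒱.filter (fun V => 0 ∉ V), (n - V.card).choose (r - V.card)
      ≤ B2 n r := by
    have hsub : 𝒱.filter (fun V => 0 ∉ V)
        ⊆ (Icc 1 n).powerset.filter (fun V => a ∈ V ∧ V.card ≤ r) := by
      intro V hV
      simp only [mem_filter] at hV
      have hp := pmem (hshape V hV.1) hV.2
      simp only [mem_filter, mem_powerset]
      exact ⟨hp.1, hmem V hV.1, hp.2.2⟩
    calc ∑ V ∈ 𝒱.filter (fun V => 0 ∉ V), (n - V.card).choose (r - V.card)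
        ≤ ∑ V ∈ (Icc 1 n).powerset.filter (fun V => a ∈ V ∧ V.card ≤ r),
            (n - V.card).choose (r - V.card) :=
          sum_le_sum_of_subset hsub
      _ = 2 ^ (r - 1) * (n - 1).choose (r - 1) := by
          have := star_ident (G := Icc 1 n) ha hr (by rw [hG]; exact hrn)
          rw [hG] at this
          exact this
      _ = B2 n r := rfl
  omega








/-- Splitting a sum over `Icc 1 (m+2)`. -/
lemma sum_Icc_split (f : ℕ → ℕ) (m : ℕ) :
    ∑ k ∈ Icc 1 (m+2), f k = (∑ k ∈ Icc 1 m, f k) + f (m+1) + f (m+2) := by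
  rw [sum_Icc_succ_top (by omega), sum_Icc_succ_top (by omega)]

/-- Stabilization under the compressions `mv a n` for `a ∈ [1, n-1]`. -/
lemma exists_stable (n r : ℕ) (hn : 2 ≤ n) :
    ∀ M : ℕ, ∀ 𝒱 : Finset (Finset ℕ),
    (∀ V ∈ 𝒱, pureOK n r V ∨ zeroOK n r V) →
    (∀ A ∈ 𝒱, ∀ B ∈ 𝒱, (A ∩ B).Nonempty) →
    (∀ V ∈ 𝒱, 2 ≤ V.card) →
    (∑ V ∈ 𝒱, (if n ∈ V then 1 else 0)) ≤ M →
    ∃ 𝒲 : Finset (Finset ℕ),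
      (∀ V ∈ 𝒲, pureOK n r V ∨ zeroOK n r V) ∧
      (∀ A ∈ 𝒲, ∀ B ∈ 𝒲, (A ∩ B).Nonempty) ∧
      (∀ V ∈ 𝒲, 2 ≤ V.card) ∧
      (∑ V ∈ 𝒲, wt n r V = ∑ V ∈ 𝒱, wt n r V) ∧
      ((∀ V ∈ 𝒱, 0 ∉ V) → (∀ V ∈ 𝒲, 0 ∉ V)) ∧
      (∀ a ∈ Icc 1 (n-1), ∀ V ∈ 𝒲, n ∈ V → a ∉ V → mv a n V ∈ 𝒲) := by
  intro M
  induction M with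
  | zero =>
    intro 𝒱 h1 h2 h3 hM
    by_cases hst : ∀ a ∈ Icc 1 (n-1), comp a n 𝒱 = 𝒱
    · exact ⟨𝒱, h1, h2, h3, rfl, fun h => h, fun a ha V hV hnV haV =>
        comp_eq_closure (hst a ha) V hV hnV haV⟩
    · exfalso
      push_neg at hst
      obtain ⟨a, ha, hne⟩ := hst
      have hab : a ≠ n := by simp only [mem_Icc] at ha; omega
      rcases comp_measure hab 𝒱 (fun V => if n ∈ V then 1 else 0)
        (fun A hnA haA => by
          show (if n ∈ mv a n A then 1 else 0) < (if n ∈ A then 1 else 0)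
          rw [if_neg (not_mem_mv hab A), if_pos hnA]; omega) with h | h
      · exact hne h
      · omega
  | succ M ih =>
    intro 𝒱 h1 h2 h3 hM
    by_cases hst : ∀ a ∈ Icc 1 (n-1), comp a n 𝒱 = 𝒱
    · exact ⟨𝒱, h1, h2, h3, rfl, fun h => h, fun a ha V hV hnV haV =>
        comp_eq_closure (hst a ha) V hV hnV haV⟩
    · push_neg at hst
      obtain ⟨a, ha, hne⟩ := hst
      have ha' : 1 ≤ a ∧ a ≤ n - 1 := by simpa [mem_Icc] using ha
      have hab : a ≠ n := by omega
      have ha0 : a ≠ 0 := by omega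
      have haIcc : a ∈ Icc 1 n := by simp only [mem_Icc]; omega
      -- properties of the compressed family
      have hshape' : ∀ V ∈ comp a n 𝒱, pureOK n r V ∨ zeroOK n r V := by
        intro V hV
        rcases mem_comp_cases hV with ⟨hV', _⟩ | ⟨A, hA, hnA, haA, _, rfl⟩
        · exact h1 V hV'
        · rcases h1 A hA with hp | hz
          · left
            refine ⟨?_, ?_, ?_⟩
            · intro x hx
              rcases mem_mv_iff.1 hx with rfl | ⟨hxA, _⟩
              · exact haIcc
              · exact hp.1 hxA
            · rw [card_mv hnA haA]; exact hp.2.1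
            · rw [card_mv hnA haA]; exact hp.2.2
          · right
            refine ⟨mem_mv_of_mem hz.1 (by omega), ?_, ?_⟩
            · intro x hx
              rcases mem_mv_iff.1 hx with rfl | ⟨hxA, _⟩
              · exact mem_insert_of_mem haIcc
              · exact hz.2.1 hxA
            · rw [card_mv hnA haA]; exact hz.2.2
      have hint' := comp_inter hab h2
      have hcard' : ∀ V ∈ comp a n 𝒱, 2 ≤ V.card := by
        intro V hV
        rcases mem_comp_cases hV with ⟨hV', _⟩ | ⟨A, hA, hnA, haA, _, rfl⟩
        · exact h3 V hV'
        · rw [card_mv hnA haA]; exact h3 A hA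
      have hsum' : ∑ V ∈ comp a n 𝒱, wt n r V = ∑ V ∈ 𝒱, wt n r V := by
        apply sum_comp hab
        intro A hA hnA haA
        rw [wt, wt, card_mv hnA haA]
        by_cases h0 : 0 ∈ A
        · rw [if_pos (mem_mv_of_mem h0 (by omega)), if_pos h0]
        · rw [if_neg, if_neg h0]
          intro hc
          rcases mem_mv_iff.1 hc with h | ⟨h, _⟩
          · exact ha0 h.symm
          · exact h0 h
      have h0' : (∀ V ∈ 𝒱, 0 ∉ V) → (∀ V ∈ comp a n 𝒱, 0 ∉ V) := by
        intro h0 V hV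
        rcases mem_comp_cases hV with ⟨hV', _⟩ | ⟨A, hA, hnA, haA, _, rfl⟩
        · exact h0 V hV'
        · intro hc
          rcases mem_mv_iff.1 hc with h | ⟨h, _⟩
          · exact ha0 h.symm
          · exact h0 A hA h
      have hmeas : ∑ V ∈ comp a n 𝒱, (if n ∈ V then 1 else 0) ≤ M := by
        rcases comp_measure hab 𝒱 (fun V => if n ∈ V then 1 else 0)
          (fun A hnA haA => by
            show (if n ∈ mv a n A then 1 else 0) < (if n ∈ A then 1 else 0)
            rw [if_neg (not_mem_mv hab A), if_pos hnA]; omega) with h | h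
        · exact absurd h hne
        · omega
      obtain ⟨𝒲, w1, w2, w3, w4, w5, w6⟩ := ih (comp a n 𝒱) hshape' hint' hcard' hmeas
      exact ⟨𝒲, w1, w2, w3, w4.trans hsum', fun h => w5 (h0' h), w6⟩

/-- Arithmetic recursion for the bounds. -/
lemma Brec (n m : ℕ) (hn : 2*m+4 ≤ n) :
    B1 (n-1) (m+2) + B2 (n-1) (m+1) + B1 (n-1) (m+1) ≤ B1 n (m+2) ∧
    B2 (n-1) (m+2) + B2 (n-1) (m+1) + B2 (n-1) (m+1) ≤ B2 n (m+2) := by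
  have e1 : n - 1 - 1 = n - 2 := by omega
  have e2 : m + 2 - 1 = m + 1 := by omega
  have e3 : m + 2 - 2 = m := by omega
  have e4 : m + 1 - 1 = m := by omega
  have pas1 : (n-1).choose (m+1) = (n-2).choose m + (n-2).choose (m+1) := by
    have en : n - 1 = (n-2) + 1 := by omega
    rw [en, Nat.choose_succ_succ]
  have hpow : (2:ℕ)^(m+1) = 2^m + 2^m := by rw [pow_succ]; ring
  have hd1 : (2:ℕ)^(m+1) * (n-1).choose (m+1)
      = 2^(m+1) * (n-2).choose (m+1) + 2^m * (n-2).choose m + 2^m * (n-2).choose m := by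
    rw [pas1, Nat.mul_add, hpow, Nat.add_mul]
    ring
  constructor
  · simp only [B1, B2, e1, e2, e3, e4, if_pos (show 2 ≤ m+2 by omega)]
    have hG : (n-2).choose m + (if 2 ≤ m + 1 then (n - 2).choose (m+1-2) else 0)
        ≤ (n-1).choose m := by
      by_cases hm : 1 ≤ m
      · have pas2 : (n-1).choose m = (n-2).choose (m-1) + (n-2).choose m := by
          have en : n - 1 = (n-2) + 1 := by omega
          have em : m = (m-1) + 1 := by omega
          rw [en, em, Nat.choose_succ_succ, Nat.succ_eq_add_one, ← em]
        have em2 : m + 1 - 2 = m - 1 := by omega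
        rw [if_pos (by omega), em2, pas2]
        omega
      · have hm0 : m = 0 := by omega
        subst hm0
        rw [if_neg (by omega)]
        simp
    linarith [hd1, hG]
  · simp only [B2, e1, e2, e4]
    linarith [hd1]








/-- The base case `n = 2r-1` of the main lemma. -/
lemma base_bound (m : ℕ) (𝒱 : Finset (Finset ℕ))
    (hshape : ∀ V ∈ 𝒱, pureOK (2*m+3) (m+2) V ∨ zeroOK (2*m+3) (m+2) V)
    (hint : ∀ A ∈ 𝒱, ∀ B ∈ 𝒱, (A ∩ B).Nonempty) :
    (∑ V ∈ 𝒱, wt (2*m+3) (m+2) V ≤ B1 (2*m+3) (m+2)) ∧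
      ((∀ V ∈ 𝒱, 0 ∉ V) → ∑ V ∈ 𝒱, wt (2*m+3) (m+2) V ≤ B2 (2*m+3) (m+2)) := by
  classical
  set P := 𝒱.filter (fun V => 0 ∉ V) with hP
  set Z := 𝒱.filter (fun V => 0 ∈ V) with hZ
  have hPpure : ∀ V ∈ P, pureOK (2*m+3) (m+2) V := by
    intro V hV
    have h := mem_filter.1 hV
    exact pmem (hshape V h.1) h.2
  have hP𝒱 : ∀ V ∈ P, V ∈ 𝒱 := fun V hV => (mem_filter.1 hV).1
  set v : ℕ → ℕ := fun k => ((P.filter (fun V => V.card = k))).card with hv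
  have hlevel : ∀ k, 1 ≤ k → k ≤ m+1 → v k ≤ (2*m+2).choose (k-1) := by
    intro k h1 h2
    have := ekr_nat (n := 2*m+3) h1 (by omega)
      (𝒜 := P.filter (fun V => V.card = k))
      (fun A hA => (hPpure A (mem_filter.1 hA).1).1)
      (fun A hA => (mem_filter.1 hA).2)
      (fun A hA B hB => hint A (hP𝒱 A (mem_filter.1 hA).1) B (hP𝒱 B (mem_filter.1 hB).1))
    simpa [show 2*m+3-1 = 2*m+2 from by omega] using this
  have hsum1 : ∑ V ∈ P, (2*m+3 - V.card).choose (m+2 - V.card)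
      = ∑ k ∈ Icc 1 (m+2), (2*m+3 - k).choose (m+2 - k) * v k := by
    rw [← sum_fiberwise_of_maps_to (g := fun V : Finset ℕ => V.card) (t := Icc 1 (m+2))
      (fun V hV => by
        have h := hPpure V hV
        simp only [mem_Icc]
        exact ⟨h.2.1, h.2.2⟩)
      (fun V => (2*m+3 - V.card).choose (m+2 - V.card))]
    refine sum_congr rfl fun k hk => ?_
    rw [sum_congr rfl (fun V hV => by rw [(mem_filter.1 hV).2]), sum_const, smul_eq_mul,
      mul_comm]
  set 𝒯 := Z.image (fun V => V.erase 0) with h𝒯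
  have hZOK : ∀ V ∈ Z, zeroOK (2*m+3) (m+2) V := by
    intro V hV
    have h := mem_filter.1 hV
    exact zmem (hshape V h.1) h.2
  have htcard : 𝒯.card = Z.card := by
    apply card_image_of_injOn
    intro V hV W hW h
    rw [← insert_erase (hZOK V (mem_coe.1 hV)).1, ← insert_erase (hZOK W (mem_coe.1 hW)).1]
    simp only at h
    rw [h]
  set Pr1 := P.filter (fun V => V.card = m+1) with hPr1
  set Pr := P.filter (fun V => V.card = m+2) with hPrdef
  set 𝒞 := Pr1 ∪ 𝒯 with h𝒞
  have h𝒞prop : ∀ C ∈ 𝒞, C ⊆ Icc 1 (2*m+3) ∧ C.card = m+1 := by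
    intro C hC
    rcases mem_union.1 hC with h | h
    · have hp := hPpure C (mem_filter.1 h).1
      exact ⟨hp.1, (mem_filter.1 h).2⟩
    · obtain ⟨V, hV, rfl⟩ := mem_image.1 h
      have hz := hZOK V hV
      constructor
      · intro x hx
        obtain ⟨hx0, hxV⟩ := mem_erase.1 hx
        rcases mem_insert.1 (hz.2.1 hxV) with h' | h'
        · exact absurd h' hx0
        · exact h'
      · rw [card_erase_of_mem hz.1, hz.2.2]
        omega
  have hCcomp : ∀ C ∈ 𝒞, (Icc 1 (2*m+3)) \ C ∉ Pr := by
    intro C hC hmem'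
    have hW𝒱 : (Icc 1 (2*m+3)) \ C ∈ 𝒱 := hP𝒱 _ (mem_filter.1 hmem').1
    rcases mem_union.1 hC with h | h
    · obtain ⟨x, hx⟩ := hint C (hP𝒱 C (mem_filter.1 h).1) _ hW𝒱
      obtain ⟨hx1, hx2⟩ := mem_inter.1 hx
      exact (mem_sdiff.1 hx2).2 hx1
    · obtain ⟨V, hV, rfl⟩ := mem_image.1 h
      obtain ⟨x, hx⟩ := hint V (mem_filter.1 hV).1 _ hW𝒱
      obtain ⟨hx1, hx2⟩ := mem_inter.1 hx
      obtain ⟨hxI, hxC⟩ := mem_sdiff.1 hx2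
      exact hxC (mem_erase.2 ⟨zero_not_mem_Icc hxI, hx1⟩)
  have hIcc_card : (Icc 1 (2*m+3)).card = 2*m+3 := by rw [Nat.card_Icc]; omega
  have hkey4 : 𝒞.card + Pr.card ≤ (2*m+3).choose (m+2) := by
    have hPrsub : Pr ⊆ (Icc 1 (2*m+3)).powersetCard (m+2) := by
      intro V hV
      have hp := hPpure V (mem_filter.1 hV).1
      simp only [mem_powersetCard]
      exact ⟨hp.1, (mem_filter.1 hV).2⟩
    have himg : 𝒞.image (fun C => Icc 1 (2*m+3) \ C)
        ⊆ ((Icc 1 (2*m+3)).powersetCard (m+2)) \ Pr := by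
      intro W hW
      obtain ⟨C, hC, rfl⟩ := mem_image.1 hW
      obtain ⟨hsub, hcard⟩ := h𝒞prop C hC
      simp only [mem_sdiff, mem_powersetCard]
      refine ⟨⟨sdiff_subset, ?_⟩, hCcomp C hC⟩
      rw [card_sdiff_of_subset hsub, hIcc_card, hcard]
      omega
    have hinj : Set.InjOn (fun C => Icc 1 (2*m+3) \ C) ↑𝒞 := by
      intro C hC D hD h
      have h1 := (h𝒞prop C (mem_coe.1 hC)).1
      have h2 := (h𝒞prop D (mem_coe.1 hD)).1
      simp only at h
      have h3 := congrArg (fun S => Icc 1 (2*m+3) \ S) h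
      simpa [sdiff_sdiff_self_left, inter_eq_right.2 h1, inter_eq_right.2 h2] using h3
    have h5 := card_le_card himg
    rw [card_image_of_injOn hinj, card_sdiff_of_subset hPrsub, card_powersetCard, hIcc_card] at h5
    have h6 := card_le_card hPrsub
    rw [card_powersetCard, hIcc_card] at h6
    omega
  have hchoose : (2*m+3).choose (m+2) = (2*m+2).choose (m+1) + (2*m+2).choose m := by
    have h1 : (2*m+3).choose (m+2) = (2*m+2).choose (m+1) + (2*m+2).choose (m+2) :=
      Nat.choose_succ_succ (2*m+2) (m+1)
    have h2 : (2*m+2).choose (m+2) = (2*m+2).choose m := by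
      rw [← Nat.choose_symm (show m+2 ≤ 2*m+2 by omega)]
      congr 1
      omega
    rw [h1, h2]
  -- facts
  have f1 : v (m+1) ≤ (2*m+2).choose m := by
    have := hlevel (m+1) (by omega) (by omega)
    simpa using this
  have hvPr1 : v (m+1) = Pr1.card := rfl
  have hvPr : v (m+2) = Pr.card := rfl
  have f2 : (Pr1 ∩ 𝒯).card ≤ Pr1.card := card_le_card inter_subset_left
  have f2' : (Pr1 ∩ 𝒯).card ≤ 𝒯.card := card_le_card inter_subset_right
  have f3 : 𝒞.card + (Pr1 ∩ 𝒯).card = Pr1.card + 𝒯.card := card_union_add_card_inter _ _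
  -- sums
  have hsplit := sum_split (n := 2*m+3) (r := m+2) 𝒱
  have hsum2 := sum_Icc_split (fun k => (2*m+3 - k).choose (m+2 - k) * v k) m
  have hstar := star_ident_k (n := 2*m+3) (r := m+2) (by omega) (by omega)
  have hstar2 := sum_Icc_split
    (fun k => (2*m+3 - k).choose (m+2 - k) * (2*m+3-1).choose (k-1)) m
  have hf1 : (2*m+3-(m+1)).choose (m+2-(m+1)) = m+2 := by
    rw [show 2*m+3-(m+1) = m+2 from by omega, show m+2-(m+1) = 1 from by omega,
      Nat.choose_one_right]
  have hf2 : (2*m+3-(m+2)).choose (m+2-(m+2)) = 1 := by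
    rw [show m+2-(m+2) = 0 from by omega, Nat.choose_zero_right]
  have hlow : ∑ k ∈ Icc 1 m, (2*m+3-k).choose (m+2-k) * v k
      ≤ ∑ k ∈ Icc 1 m, (2*m+3-k).choose (m+2-k) * (2*m+2).choose (k-1) := by
    apply sum_le_sum
    intro k hk
    simp only [mem_Icc] at hk
    exact Nat.mul_le_mul_left _ (hlevel k hk.1 (by omega))
  have hstar' : (∑ k ∈ Icc 1 m, (2*m+3-k).choose (m+2-k) * (2*m+2).choose (k-1))
      + (m+2) * (2*m+2).choose m + (2*m+2).choose (m+1)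
      = 2^(m+1) * (2*m+2).choose (m+1) := by
    have he : (2:ℕ)*m+3-1 = 2*m+2 := by omega
    have hem : m+2-1 = m+1 := by omega
    rw [he] at hstar2
    rw [hem, he] at hstar
    rw [← hstar, hstar2, hf1, hf2, one_mul,
      show m+1-1 = m from by omega, hem]
  have hsum_main : ∑ V ∈ 𝒱, wt (2*m+3) (m+2) V
      = (∑ k ∈ Icc 1 m, (2*m+3-k).choose (m+2-k) * v k)
        + (m+2) * v (m+1) + v (m+2) + Z.card := by
    rw [hsplit, hsum1, hsum2, hf1, hf2, one_mul]
  -- product helpers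
  have hm2a : (m+2) * v (m+1) = (m+1) * v (m+1) + v (m+1) := by ring
  have hm2b : (m+2) * (2*m+2).choose m = (m+1) * (2*m+2).choose m + (2*m+2).choose m := by
    ring
  have hmul : (m+1) * v (m+1) ≤ (m+1) * (2*m+2).choose m := Nat.mul_le_mul_left _ f1
  have hkey4' : 𝒞.card + v (m+2) ≤ (2*m+2).choose (m+1) + (2*m+2).choose m := by
    rw [hvPr]
    omega
  constructor
  · have hB1 : B1 (2*m+3) (m+2) = 2^(m+1) * (2*m+2).choose (m+1) + (2*m+2).choose m := by
      rw [B1, B2, if_pos (show 2 ≤ m+2 by omega)]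
      congr 2 <;> omega
    rw [hB1, hsum_main]
    linarith [hlow, hstar', hm2a, hm2b, hmul, f1, f2, f2', f3, hkey4', htcard]
  · intro h0
    have hZempty : Z = ∅ := by
      rw [hZ]
      apply filter_eq_empty_iff.2
      intro V hV
      exact h0 V hV
    have hZ0 : Z.card = 0 := by rw [hZempty]; simp
    have hB2 : B2 (2*m+3) (m+2) = 2^(m+1) * (2*m+2).choose (m+1) := by
      rw [B2]
      congr 2 <;> omega
    rw [hB2, hsum_main]
    have ht0 : 𝒯.card = 0 := by omega
    linarith [hlow, hstar', hm2a, hm2b, hmul, f1, f2, f2', f3, hkey4', htcard]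








theorem main_P : ∀ n : ℕ, ∀ r : ℕ, ∀ 𝒱 : Finset (Finset ℕ), 1 ≤ r → 2 * r - 1 ≤ n →
    (∀ V ∈ 𝒱, pureOK n r V ∨ zeroOK n r V) →
    (∀ A ∈ 𝒱, ∀ B ∈ 𝒱, (A ∩ B).Nonempty) →
    (∑ V ∈ 𝒱, wt n r V ≤ B1 n r) ∧
      ((∀ V ∈ 𝒱, 0 ∉ V) → ∑ V ∈ 𝒱, wt n r V ≤ B2 n r) := by
  intro n
  induction n using Nat.strong_induction_on with
  | _ n IH =>
  intro r 𝒱 hr hrn hshape hint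
  rcases Nat.lt_or_ge r 2 with hr1 | hr2
  · -- r = 1
    obtain rfl : r = 1 := by omega
    have hwt1 : ∀ V ∈ 𝒱, wt n 1 V ≤ 1 := by
      intro V hV
      rw [wt]
      split
      · exact le_refl 1
      · rcases hshape V hV with h | h
        · have h1 := h.2.1
          have h2 := h.2.2
          have : V.card = 1 := by omega
          rw [this]
          simp
        · rw [h.2.2]
          simp
    have hcard : 𝒱.card ≤ 1 := by
      rcases 𝒱.eq_empty_or_nonempty with rfl | ⟨V₀, hV₀⟩
      · simp
      · rw [card_le_one]
        intro A hA B hB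
        have hA1 : A.card = 1 := by
          rcases hshape A hA with h | h
          · have h1 := h.2.1
            have h2 := h.2.2
            omega
          · exact h.2.2
        have hB1 : B.card = 1 := by
          rcases hshape B hB with h | h
          · have h1 := h.2.1
            have h2 := h.2.2
            omega
          · exact h.2.2
        obtain ⟨a, rfl⟩ := card_eq_one.1 hA1
        obtain ⟨b, rfl⟩ := card_eq_one.1 hB1
        obtain ⟨x, hx⟩ := hint _ hA _ hB
        obtain ⟨h1, h2⟩ := mem_inter.1 hx
        rw [mem_singleton.1 h1] at h2
        rw [mem_singleton.1 h2]
    have hsum : ∑ V ∈ 𝒱, wt n 1 V ≤ 1 := by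
      calc ∑ V ∈ 𝒱, wt n 1 V ≤ ∑ V ∈ 𝒱, 1 := sum_le_sum hwt1
        _ = 𝒱.card := by simp
        _ ≤ 1 := hcard
    have hB2 : B2 n 1 = 1 := by simp [B2]
    constructor
    · rw [B1, hB2, if_neg (by omega)]
      omega
    · intro _
      rw [hB2]
      exact hsum
  -- r ≥ 2
  by_cases hsing : ∃ V ∈ 𝒱, V.card = 1
  · -- kernel case
    obtain ⟨V₀, hV₀, hc⟩ := hsing
    obtain ⟨a, rfl⟩ := card_eq_one.1 hc
    have hp : pureOK n r {a} := by
      rcases hshape _ hV₀ with h | h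
      · exact h
      · exfalso
        have := h.2.2
        simp at this
        omega
    have ha : a ∈ Icc 1 n := hp.1 (mem_singleton_self a)
    have hmem : ∀ V ∈ 𝒱, a ∈ V := by
      intro V hV
      obtain ⟨x, hx⟩ := hint V hV _ hV₀
      obtain ⟨h1, h2⟩ := mem_inter.1 hx
      rwa [mem_singleton.1 h2] at h1
    have hK := kernel_bound hr (by omega) hshape ha hmem
    have hZ := zcard_bound hr2 (by omega) hshape ha hmem
    constructor
    · refine hK.trans ?_
      rw [B1, if_pos hr2]
      omega
    · intro h0
      have hempty : (𝒱.filter (fun V => 0 ∈ V)) = ∅ :=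
        filter_eq_empty_iff.2 (fun V hV h => h0 V hV h)
      rw [hempty] at hK
      simpa using hK
  -- no singletons
  push_neg at hsing
  obtain ⟨m, rfl⟩ : ∃ m, r = m + 2 := ⟨r - 2, by omega⟩
  have h2card : ∀ V ∈ 𝒱, 2 ≤ V.card := by
    intro V hV
    have h1 : V.card ≠ 1 := hsing V hV
    have h2 : 1 ≤ V.card := by
      rcases hshape V hV with h | h
      · exact h.2.1
      · rw [h.2.2]; omega
    omega
  rcases Nat.lt_or_ge n (2*(m+2)) with hbase | hstep
  · -- base case n = 2m+3
    obtain rfl : n = 2*m+3 := by omega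
    exact base_bound m 𝒱 hshape hint
  -- step case
  obtain ⟨𝒲, hWs, hWi, hWc, hWsum, hW0, hstab⟩ := exists_stable n (m+2) (by omega)
    (∑ V ∈ 𝒱, (if n ∈ V then 1 else 0)) 𝒱 hshape hint h2card le_rfl
  rw [← hWsum]
  set 𝒟 := 𝒲.filter (fun V => ¬ n ∈ V) with h𝒟
  set 𝒟m := 𝒟.filter (fun V => 0 ∉ V ∧ V.card ≤ m+1) with h𝒟m
  set ℰp := 𝒲.filter (fun V => n ∈ V) with hℰp
  set ℰ := ℰp.image (fun V => V.erase n) with hℰ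
  have hWsub : ∀ V ∈ 𝒲, V.card ≤ m+2 := fun V hV => card_le_of_shape (hWs V hV)
  have pw1 : ∀ V ∈ 𝒟, wt n (m+2) V
      = wt (n-1) (m+2) V + (if 0 ∉ V ∧ V.card ≤ m+1 then wt (n-1) (m+1) V else 0) := by
    intro V hV
    obtain ⟨hV𝒲, hVn⟩ := mem_filter.1 hV
    by_cases h0 : 0 ∈ V
    · rw [wt, if_pos h0, wt, if_pos h0, if_neg (by tauto)]
    · have hp := pmem (hWs V hV𝒲) h0
      rw [wt, if_neg h0, wt, if_neg h0]
      by_cases hk : V.card ≤ m+1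
      · rw [if_pos ⟨h0, hk⟩, wt, if_neg h0]
        have e1 : n - V.card = (n-1-V.card) + 1 := by omega
        have e2 : m+2 - V.card = (m+1-V.card) + 1 := by omega
        rw [e1, e2, Nat.choose_succ_succ]
        simp only [Nat.succ_eq_add_one]
        omega
      · have hke : V.card = m+2 := by
          have := hp.2.2
          omega
        rw [if_neg (by tauto), hke]
        rw [show m+2-(m+2) = 0 from by omega, Nat.choose_zero_right,
          Nat.choose_zero_right]
  have hd_split : ∑ V ∈ 𝒲, wt n (m+2) V
      = ∑ V ∈ ℰp, wt n (m+2) V + ∑ V ∈ 𝒟, wt n (m+2) V := by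
    rw [← sum_filter_add_sum_filter_not 𝒲 (fun V => n ∈ V)]
  have hDsum : ∑ V ∈ 𝒟, wt n (m+2) V
      = ∑ V ∈ 𝒟, wt (n-1) (m+2) V + ∑ V ∈ 𝒟m, wt (n-1) (m+1) V := by
    rw [sum_congr rfl pw1, sum_add_distrib]
    congr 1
    exact (sum_filter (fun V => 0 ∉ V ∧ V.card ≤ m+1) (wt (n-1) (m+1))).symm
  have hEinj : ∀ V ∈ ℰp, ∀ W ∈ ℰp, V.erase n = W.erase n → V = W := by
    intro V hV W hW h
    rw [← insert_erase (mem_filter.1 hV).2, ← insert_erase (mem_filter.1 hW).2, h]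
  have pw2 : ∀ V ∈ ℰp, wt n (m+2) V = wt (n-1) (m+1) (V.erase n) := by
    intro V hV
    obtain ⟨hV𝒲, hVn⟩ := mem_filter.1 hV
    have hc1 : 1 ≤ V.card := card_pos.2 ⟨n, hVn⟩
    by_cases h0 : 0 ∈ V
    · rw [wt, if_pos h0, wt, if_pos (mem_erase.2 ⟨by omega, h0⟩)]
    · rw [wt, if_neg h0, wt, if_neg (fun hc => h0 (mem_of_mem_erase hc))]
      rw [card_erase_of_mem hVn]
      congr 1 <;> omega
  have hEsum : ∑ V ∈ ℰp, wt n (m+2) V = ∑ V ∈ ℰ, wt (n-1) (m+1) V := by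
    rw [hℰ, sum_image hEinj]
    exact sum_congr rfl pw2
  have hD_shape : ∀ V ∈ 𝒟, pureOK (n-1) (m+2) V ∨ zeroOK (n-1) (m+2) V := by
    intro V hV
    obtain ⟨hV𝒲, hVn⟩ := mem_filter.1 hV
    rcases hWs V hV𝒲 with hp | hz
    · left
      refine ⟨fun x hx => ?_, hp.2.1, hp.2.2⟩
      have h1 := hp.1 hx
      have h2 : x ≠ n := fun he => hVn (he ▸ hx)
      simp only [mem_Icc] at h1 ⊢
      omega
    · right
      refine ⟨hz.1, fun x hx => ?_, hz.2.2⟩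
      rcases mem_insert.1 (hz.2.1 hx) with h | h
      · exact h ▸ mem_insert_self _ _
      · apply mem_insert_of_mem
        have h2 : x ≠ n := fun he => hVn (he ▸ hx)
        simp only [mem_Icc] at h ⊢
        omega
  have hD_int : ∀ A ∈ 𝒟, ∀ B ∈ 𝒟, (A ∩ B).Nonempty :=
    fun A hA B hB => hWi A (mem_filter.1 hA).1 B (mem_filter.1 hB).1
  have IH1 := IH (n-1) (by omega) (m+2) 𝒟 (by omega) (by omega) hD_shape hD_int
  have hDm_shape : ∀ V ∈ 𝒟m, pureOK (n-1) (m+1) V ∨ zeroOK (n-1) (m+1) V := by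
    intro V hV
    have h := mem_filter.1 hV
    left
    rcases hD_shape V h.1 with hp | hz
    · exact ⟨hp.1, hp.2.1, h.2.2⟩
    · exact absurd hz.1 h.2.1
  have hDm_int : ∀ A ∈ 𝒟m, ∀ B ∈ 𝒟m, (A ∩ B).Nonempty :=
    fun A hA B hB => hD_int A (mem_filter.1 hA).1 B (mem_filter.1 hB).1
  have IH2 := (IH (n-1) (by omega) (m+1) 𝒟m (by omega) (by omega) hDm_shape hDm_int).2
    (fun V hV => (mem_filter.1 hV).2.1)
  have hE_shape : ∀ V ∈ ℰ, pureOK (n-1) (m+1) V ∨ zeroOK (n-1) (m+1) V := by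
    intro V' hV'
    obtain ⟨V, hV, rfl⟩ := mem_image.1 hV'
    obtain ⟨hV𝒲, hVn⟩ := mem_filter.1 hV
    have hcV := hWc V hV𝒲
    rcases hWs V hV𝒲 with hp | hz
    · left
      refine ⟨fun x hx => ?_, ?_, ?_⟩
      · obtain ⟨hxn, hxV⟩ := mem_erase.1 hx
        have h1 := hp.1 hxV
        simp only [mem_Icc] at h1 ⊢
        omega
      · rw [card_erase_of_mem hVn]
        omega
      · rw [card_erase_of_mem hVn]
        have := hp.2.2
        omega
    · right
      refine ⟨mem_erase.2 ⟨by omega, hz.1⟩, fun x hx => ?_, ?_⟩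
      · obtain ⟨hxn, hxV⟩ := mem_erase.1 hx
        rcases mem_insert.1 (hz.2.1 hxV) with h | h
        · exact h ▸ mem_insert_self _ _
        · apply mem_insert_of_mem
          simp only [mem_Icc] at h ⊢
          omega
      · rw [card_erase_of_mem hVn, hz.2.2]
        omega
  have hE_int : ∀ A' ∈ ℰ, ∀ B' ∈ ℰ, (A' ∩ B').Nonempty := by
    intro A' hA' B' hB'
    obtain ⟨A, hA, rfl⟩ := mem_image.1 hA'
    obtain ⟨B, hB, rfl⟩ := mem_image.1 hB'
    obtain ⟨hA𝒲, hAn⟩ := mem_filter.1 hA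
    obtain ⟨hB𝒲, hBn⟩ := mem_filter.1 hB
    have hAbound : (A ∩ Icc 1 (n-1)).card ≤ m+1 := by
      have hsub : A ∩ Icc 1 (n-1) ⊆ A.erase n := by
        intro x hx
        obtain ⟨hxA, hxI⟩ := mem_inter.1 hx
        simp only [mem_Icc] at hxI
        exact mem_erase.2 ⟨by omega, hxA⟩
      calc (A ∩ Icc 1 (n-1)).card ≤ (A.erase n).card := card_le_card hsub
        _ = A.card - 1 := card_erase_of_mem hAn
        _ ≤ m+1 := by have := hWsub A hA𝒲; omega
    have hBbound : (B ∩ Icc 1 (n-1)).card ≤ m+1 := by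
      have hsub : B ∩ Icc 1 (n-1) ⊆ B.erase n := by
        intro x hx
        obtain ⟨hxB, hxI⟩ := mem_inter.1 hx
        simp only [mem_Icc] at hxI
        exact mem_erase.2 ⟨by omega, hxB⟩
      calc (B ∩ Icc 1 (n-1)).card ≤ (B.erase n).card := card_le_card hsub
        _ = B.card - 1 := card_erase_of_mem hBn
        _ ≤ m+1 := by have := hWsub B hB𝒲; omega
    have hfree : ∃ a ∈ Icc 1 (n-1), a ∉ A ∧ a ∉ B := by
      by_contra hno
      push_neg at hno
      have hsub : Icc 1 (n-1) ⊆ (A ∩ Icc 1 (n-1)) ∪ (B ∩ Icc 1 (n-1)) := by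
        intro x hx
        rcases Decidable.em (x ∈ A) with h | h
        · exact mem_union_left _ (mem_inter.2 ⟨h, hx⟩)
        · exact mem_union_right _ (mem_inter.2 ⟨hno x hx h, hx⟩)
      have h1 := card_le_card hsub
      have h2 := card_union_le (A ∩ Icc 1 (n-1)) (B ∩ Icc 1 (n-1))
      rw [Nat.card_Icc] at h1
      omega
    obtain ⟨a, haI, haA, haB⟩ := hfree
    have hmvA := hstab a haI A hA𝒲 hAn haA
    obtain ⟨x, hx⟩ := hWi _ hmvA B hB𝒲
    obtain ⟨hx1, hx2⟩ := mem_inter.1 hx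
    rcases mem_mv_iff.1 hx1 with rfl | ⟨hxA, hxn⟩
    · exact absurd hx2 haB
    · exact ⟨x, mem_inter.2 ⟨mem_erase.2 ⟨hxn, hxA⟩, mem_erase.2 ⟨hxn, hx2⟩⟩⟩
  have IH3 := IH (n-1) (by omega) (m+1) ℰ (by omega) (by omega) hE_shape hE_int
  obtain ⟨hB1rec, hB2rec⟩ := Brec n m (by omega)
  constructor
  · have hc : ∑ V ∈ 𝒲, wt n (m+2) V
        = (∑ V ∈ ℰ, wt (n-1) (m+1) V)
          + ((∑ V ∈ 𝒟, wt (n-1) (m+2) V) + (∑ V ∈ 𝒟m, wt (n-1) (m+1) V)) := by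
      rw [hd_split, hEsum, hDsum]
    rw [hc]
    have := add_le_add IH3.1 (add_le_add IH1.1 IH2)
    refine this.trans ?_
    linarith [hB1rec]
  · intro h0
    have h0W := hW0 h0
    have h0E : ∀ V ∈ ℰ, 0 ∉ V := by
      intro V' hV' h
      obtain ⟨V, hV, rfl⟩ := mem_image.1 hV'
      exact h0W V (mem_filter.1 hV).1 (mem_of_mem_erase h)
    have h0D : ∀ V ∈ 𝒟, 0 ∉ V := fun V hV => h0W V (mem_filter.1 hV).1
    have hc : ∑ V ∈ 𝒲, wt n (m+2) V
        = (∑ V ∈ ℰ, wt (n-1) (m+1) V)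
          + ((∑ V ∈ 𝒟, wt (n-1) (m+2) V) + (∑ V ∈ 𝒟m, wt (n-1) (m+1) V)) := by
      rw [hd_split, hEsum, hDsum]
    rw [hc]
    have := add_le_add (IH3.2 h0E) (add_le_add (IH1.2 h0D) IH2)
    refine this.trans ?_
    linarith [hB2rec]




lemma adj_x0y {n i : ℕ} (h1 : 1 ≤ i) (h2 : i ≤ n) :
    (depthTwoClaw n).Adj ((0 : ℕ), (0 : ℕ)) (i, 2) := by
  rw [depthTwoClaw, SimpleGraph.fromEdgeSet_adj]
  constructor
  · exact ⟨i, by simp only [mem_Icc]; omega, Or.inl rfl⟩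
  · intro h
    have := congrArg Prod.snd h
    simp at this

lemma adj_xy {n i : ℕ} (h1 : 1 ≤ i) (h2 : i ≤ n) :
    (depthTwoClaw n).Adj (i, 1) (i, 2) := by
  rw [depthTwoClaw, SimpleGraph.fromEdgeSet_adj]
  constructor
  · exact ⟨i, by simp only [mem_Icc]; omega, Or.inr rfl⟩
  · intro h
    have := congrArg Prod.snd h
    simp at this

lemma adj_cases {n : ℕ} {u v : ℕ × ℕ} (h : (depthTwoClaw n).Adj u v) :
    ∃ i, 1 ≤ i ∧ i ≤ n ∧
      ((u = ((0:ℕ),(0:ℕ)) ∧ v = (i, 2)) ∨ (v = ((0:ℕ),(0:ℕ)) ∧ u = (i, 2)) ∨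
        (u = (i, 1) ∧ v = (i, 2)) ∨ (v = (i, 1) ∧ u = (i, 2))) := by
  rw [depthTwoClaw, SimpleGraph.fromEdgeSet_adj] at h
  obtain ⟨⟨i, hi, hcase⟩, hne⟩ := h
  simp only [mem_Icc] at hi
  refine ⟨i, hi.1, hi.2, ?_⟩
  rcases hcase with h | h <;> rw [Sym2.eq_iff] at h
  · rcases h with ⟨h1, h2⟩ | ⟨h1, h2⟩
    · exact Or.inl ⟨h1, h2⟩
    · exact Or.inr (Or.inl ⟨h2, h1⟩)
  · rcases h with ⟨h1, h2⟩ | ⟨h1, h2⟩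
    · exact Or.inr (Or.inr (Or.inl ⟨h1, h2⟩))
    · exact Or.inr (Or.inr (Or.inr ⟨h2, h1⟩))

lemma mem_indep_iff {n r : ℕ} {I : Finset (ℕ × ℕ)} :
    I ∈ depthTwoClawIndep n r ↔
      I ⊆ depthTwoClawVerts n ∧ I.card = r ∧
        ∀ u ∈ I, ∀ v ∈ I, ¬ (depthTwoClaw n).Adj u v := by
  classical
  simp only [depthTwoClawIndep, mem_filter, mem_powerset]

lemma mem_verts_iff {n : ℕ} {v : ℕ × ℕ} :
    v ∈ depthTwoClawVerts n ↔
      v = ((0:ℕ),(0:ℕ)) ∨ (1 ≤ v.1 ∧ v.1 ≤ n ∧ (v.2 = 1 ∨ v.2 = 2)) := by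
  rw [depthTwoClawVerts, mem_insert]
  constructor
  · rintro (h | h)
    · exact Or.inl h
    · rw [mem_product, mem_Icc] at h
      simp only [mem_insert, mem_singleton] at h
      exact Or.inr ⟨h.1.1, h.1.2, h.2⟩
  · rintro (h | ⟨h1, h2, h3⟩)
    · exact Or.inl h
    · right
      rw [mem_product, mem_Icc]
      simp only [mem_insert, mem_singleton]
      exact ⟨⟨h1, h2⟩, h3⟩

lemma indep_vert {n r : ℕ} {I : Finset (ℕ × ℕ)} (hI : I ∈ depthTwoClawIndep n r)
    {v : ℕ × ℕ} (hv : v ∈ I) :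
    v = ((0:ℕ),(0:ℕ)) ∨ (1 ≤ v.1 ∧ v.1 ≤ n ∧ (v = (v.1, 1) ∨ v = (v.1, 2))) := by
  have h := mem_verts_iff.1 ((mem_indep_iff.1 hI).1 hv)
  rcases h with h | ⟨h1, h2, h3⟩
  · exact Or.inl h
  · right
    refine ⟨h1, h2, ?_⟩
    rcases h3 with h3 | h3
    · left; rw [← h3]
    · right; rw [← h3]

lemma indep_K1 {n r : ℕ} {I : Finset (ℕ × ℕ)} (hI : I ∈ depthTwoClawIndep n r)
    (i : ℕ) : ¬((i, 1) ∈ I ∧ (i, 2) ∈ I) := by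
  rintro ⟨h1, h2⟩
  rcases indep_vert hI h1 with h | ⟨ha, hb, _⟩
  · simp at h
  · exact (mem_indep_iff.1 hI).2.2 _ h1 _ h2 (adj_xy ha hb)

lemma indep_K2 {n r : ℕ} {I : Finset (ℕ × ℕ)} (hI : I ∈ depthTwoClawIndep n r)
    (h0 : ((0:ℕ),(0:ℕ)) ∈ I) (i : ℕ) : (i, 2) ∉ I := by
  intro h2
  rcases indep_vert hI h2 with h | ⟨ha, hb, _⟩
  · simp at h
  · exact (mem_indep_iff.1 hI).2.2 _ h0 _ h2 (adj_x0y ha hb)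

lemma indep_of {n r : ℕ} {I : Finset (ℕ × ℕ)} (hsub : I ⊆ depthTwoClawVerts n)
    (hcard : I.card = r) (hK1 : ∀ i, ¬((i, 1) ∈ I ∧ (i, 2) ∈ I))
    (hK2 : ((0:ℕ),(0:ℕ)) ∈ I → ∀ i, (i, 2) ∉ I) : I ∈ depthTwoClawIndep n r := by
  rw [mem_indep_iff]
  refine ⟨hsub, hcard, ?_⟩
  intro u hu v hv hadj
  obtain ⟨i, h1, h2, hcase⟩ := adj_cases hadj
  rcases hcase with ⟨he1, he2⟩ | ⟨he1, he2⟩ | ⟨he1, he2⟩ | ⟨he1, he2⟩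
  · exact hK2 (he1 ▸ hu) i (he2 ▸ hv)
  · exact hK2 (he1 ▸ hv) i (he2 ▸ hu)
  · exact hK1 i ⟨he1 ▸ hu, he2 ▸ hv⟩
  · exact hK1 i ⟨he1 ▸ hv, he2 ▸ hu⟩

/-- The set of `x`-indices of an independent set. -/
def Xp (B : Finset (ℕ × ℕ)) : Finset ℕ := (B.filter (fun v => v.2 = 1)).image Prod.fst

/-- The set of `y`-indices of an independent set. -/
def Yp (B : Finset (ℕ × ℕ)) : Finset ℕ := (B.filter (fun v => v.2 = 2)).image Prod.fst

lemma mem_Xp {B : Finset (ℕ × ℕ)} {i : ℕ} : i ∈ Xp B ↔ (i, 1) ∈ B := by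
  rw [Xp, mem_image]
  constructor
  · rintro ⟨v, hv, rfl⟩
    obtain ⟨hvB, hv2⟩ := mem_filter.1 hv
    have : v = (v.1, 1) := by
      rw [← hv2]
    rwa [← this]
  · intro h
    exact ⟨(i, 1), mem_filter.2 ⟨h, rfl⟩, rfl⟩

lemma mem_Yp {B : Finset (ℕ × ℕ)} {i : ℕ} : i ∈ Yp B ↔ (i, 2) ∈ B := by
  rw [Yp, mem_image]
  constructor
  · rintro ⟨v, hv, rfl⟩
    obtain ⟨hvB, hv2⟩ := mem_filter.1 hv
    have : v = (v.1, 2) := by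
      rw [← hv2]
    rwa [← this]
  · intro h
    exact ⟨(i, 2), mem_filter.2 ⟨h, rfl⟩, rfl⟩

lemma y_count_mv {i : ℕ} {A : Finset (ℕ × ℕ)} (hb : (i, 2) ∈ A) :
    ((mv (i,1) (i,2) A).filter (fun v => v.2 = 2)).card
      < (A.filter (fun v => v.2 = 2)).card := by
  have h1 : (mv (i,1) (i,2) A).filter (fun v => v.2 = 2)
      = (A.filter (fun v => v.2 = 2)).erase (i, 2) := by
    rw [mv, filter_insert, if_neg (by norm_num), filter_erase]
  rw [h1]
  have h2 : (i, 2) ∈ A.filter (fun v => v.2 = 2) := mem_filter.2 ⟨hb, rfl⟩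
  have h3 := card_erase_of_mem h2
  have h4 := card_pos.2 ⟨_, h2⟩
  omega

lemma mv_indep {n r i : ℕ} {A : Finset (ℕ × ℕ)} (hi1 : 1 ≤ i) (hi2 : i ≤ n)
    (hA : A ∈ depthTwoClawIndep n r) (hb : (i, 2) ∈ A) (ha : (i, 1) ∉ A) :
    mv (i,1) (i,2) A ∈ depthTwoClawIndep n r := by
  apply indep_of
  · intro x hx
    rcases mem_mv_iff.1 hx with rfl | ⟨hxA, _⟩
    · rw [mem_verts_iff]
      right
      exact ⟨hi1, hi2, Or.inl rfl⟩
    · exact (mem_indep_iff.1 hA).1 hxA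
  · rw [card_mv hb ha]
    exact (mem_indep_iff.1 hA).2.1
  · intro j hj
    obtain ⟨hj1, hj2⟩ := hj
    rcases mem_mv_iff.1 hj2 with he | ⟨hj2A, hj2ne⟩
    · have := congrArg Prod.snd he
      simp at this
    · have hji : j ≠ i := fun h => hj2ne (by rw [h])
      rcases mem_mv_iff.1 hj1 with he | ⟨hj1A, _⟩
      · have := congrArg Prod.fst he
        simp at this
        exact hji this
      · exact indep_K1 hA j ⟨hj1A, hj2A⟩
  · intro h0
    rcases mem_mv_iff.1 h0 with he | ⟨h0A, _⟩
    · have := congrArg Prod.fst he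
      simp at this
      omega
    · exact absurd hb (indep_K2 hA h0A i)

/-- Stabilization of the graph family under the compressions `y_i → x_i`. -/
lemma exists_stable_graph (n r : ℕ) :
    ∀ M : ℕ, ∀ 𝒜 : Finset (Finset (ℕ × ℕ)),
    𝒜 ⊆ depthTwoClawIndep n r →
    (∀ A ∈ 𝒜, ∀ B ∈ 𝒜, (A ∩ B).Nonempty) →
    (∑ A ∈ 𝒜, (A.filter (fun v => v.2 = 2)).card) ≤ M →
    ∃ ℬ : Finset (Finset (ℕ × ℕ)), ℬ ⊆ depthTwoClawIndep n r ∧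
      (∀ A ∈ ℬ, ∀ B ∈ ℬ, (A ∩ B).Nonempty) ∧ ℬ.card = 𝒜.card ∧
      (∀ i, 1 ≤ i → i ≤ n → ∀ A ∈ ℬ, (i, 2) ∈ A → (i, 1) ∉ A →
        mv (i,1) (i,2) A ∈ ℬ) := by
  intro M
  induction M with
  | zero =>
    intro 𝒜 hsub hint hM
    by_cases hst : ∀ i ∈ Icc 1 n, comp ((i:ℕ),(1:ℕ)) (i, 2) 𝒜 = 𝒜
    · refine ⟨𝒜, hsub, hint, rfl, ?_⟩
      intro i h1 h2 A hA hb ha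
      exact comp_eq_closure (hst i (by simp only [mem_Icc]; omega)) A hA hb ha
    · exfalso
      push_neg at hst
      obtain ⟨i, hi, hne⟩ := hst
      have hab : ((i:ℕ),(1:ℕ)) ≠ (i, 2) := by
        intro h
        have := congrArg Prod.snd h
        simp at this
      have hcm := comp_measure hab 𝒜 (fun A => (A.filter (fun v => v.2 = 2)).card)
        (fun A hbA _ => y_count_mv hbA)
      rcases hcm with h | h
      · exact hne h
      · simp only [] at h
        omega
  | succ M ih =>
    intro 𝒜 hsub hint hM
    by_cases hst : ∀ i ∈ Icc 1 n, comp ((i:ℕ),(1:ℕ)) (i, 2) 𝒜 = 𝒜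
    · refine ⟨𝒜, hsub, hint, rfl, ?_⟩
      intro i h1 h2 A hA hb ha
      exact comp_eq_closure (hst i (by simp only [mem_Icc]; omega)) A hA hb ha
    · push_neg at hst
      obtain ⟨i, hi, hne⟩ := hst
      simp only [mem_Icc] at hi
      have hab : ((i:ℕ),(1:ℕ)) ≠ (i, 2) := by
        intro h
        have := congrArg Prod.snd h
        simp at this
      have hsub' : comp ((i:ℕ),(1:ℕ)) (i, 2) 𝒜 ⊆ depthTwoClawIndep n r := by
        intro A hA
        rcases mem_comp_cases hA with ⟨hA', _⟩ | ⟨B, hB, hbB, haB, _, rfl⟩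
        · exact hsub hA'
        · exact mv_indep hi.1 hi.2 (hsub hB) hbB haB
      have hint' := comp_inter hab hint
      have hmeas : ∑ A ∈ comp ((i:ℕ),(1:ℕ)) (i, 2) 𝒜,
          (A.filter (fun v => v.2 = 2)).card ≤ M := by
        have hcm := comp_measure hab 𝒜 (fun A => (A.filter (fun v => v.2 = 2)).card)
          (fun A hbA _ => y_count_mv hbA)
        rcases hcm with h | h
        · exact absurd h hne
        · simp only [] at h
          omega
      obtain ⟨ℬ, b1, b2, b3, b4⟩ := ih _ hsub' hint' hmeas
      exact ⟨ℬ, b1, b2, b3.trans (card_comp hab 𝒜), b4⟩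








/-- After compression, the `x`-parts of two zero-free members intersect. -/
lemma X_inter {n r : ℕ} {ℬ : Finset (Finset (ℕ × ℕ))}
    (hmem : ℬ ⊆ depthTwoClawIndep n r)
    (hint : ∀ A ∈ ℬ, ∀ B ∈ ℬ, (A ∩ B).Nonempty)
    (hstab : ∀ i, 1 ≤ i → i ≤ n → ∀ A ∈ ℬ, (i, 2) ∈ A → (i, 1) ∉ A →
      mv (i,1) (i,2) A ∈ ℬ) :
    ∀ M : ℕ, ∀ B ∈ ℬ, ∀ B' ∈ ℬ, ((0:ℕ),(0:ℕ)) ∉ B → ((0:ℕ),(0:ℕ)) ∉ B' →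
      (Yp B ∩ Yp B').card ≤ M → (Xp B ∩ Xp B').Nonempty := by
  intro M
  induction M with
  | zero =>
    intro B hB B' hB' h0 h0' hY
    obtain ⟨v, hv⟩ := hint B hB B' hB'
    obtain ⟨hv1, hv2⟩ := mem_inter.1 hv
    rcases indep_vert (hmem hB) hv1 with rfl | ⟨ha, hb, hc⟩
    · exact absurd hv1 h0
    · rcases hc with hc | hc
      · exact ⟨v.1, mem_inter.2 ⟨mem_Xp.2 (hc ▸ hv1), mem_Xp.2 (hc ▸ hv2)⟩⟩
      · exfalso
        have hYmem : v.1 ∈ Yp B ∩ Yp B' :=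
          mem_inter.2 ⟨mem_Yp.2 (hc ▸ hv1), mem_Yp.2 (hc ▸ hv2)⟩
        have := card_pos.2 ⟨_, hYmem⟩
        omega
  | succ M ih =>
    intro B hB B' hB' h0 h0' hY
    rcases (Yp B ∩ Yp B').eq_empty_or_nonempty with hYe | ⟨i, hi⟩
    · exact ih B hB B' hB' h0 h0' (by rw [hYe]; simp)
    · obtain ⟨hiB, hiB'⟩ := mem_inter.1 hi
      have hi2B : (i, 2) ∈ B := mem_Yp.1 hiB
      have hi2B' : (i, 2) ∈ B' := mem_Yp.1 hiB'
      have hrange : 1 ≤ i ∧ i ≤ n := by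
        rcases indep_vert (hmem hB) hi2B with he | ⟨ha, hb, _⟩
        · exact absurd he (by simp)
        · exact ⟨ha, hb⟩
      have hi1B : (i, 1) ∉ B := fun h => indep_K1 (hmem hB) i ⟨h, hi2B⟩
      have hB₂ : mv ((i:ℕ),(1:ℕ)) (i, 2) B ∈ ℬ := hstab i hrange.1 hrange.2 B hB hi2B hi1B
      have h0₂ : ((0:ℕ),(0:ℕ)) ∉ mv ((i:ℕ),(1:ℕ)) (i, 2) B := by
        intro h
        rcases mem_mv_iff.1 h with he | ⟨hmem', _⟩
        · have := congrArg Prod.fst he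
          simp at this
          omega
        · exact h0 hmem'
      have hYcard : (Yp (mv ((i:ℕ),(1:ℕ)) (i, 2) B) ∩ Yp B').card ≤ M := by
        have hYeq : Yp (mv ((i:ℕ),(1:ℕ)) (i, 2) B) ∩ Yp B' = (Yp B ∩ Yp B').erase i := by
          ext j
          simp only [mem_inter, mem_erase, mem_Yp]
          constructor
          · rintro ⟨hj1, hj2⟩
            rcases mem_mv_iff.1 hj1 with he | ⟨hjB, hjne⟩
            · have := congrArg Prod.snd he
              simp at this
            · have hji : j ≠ i := fun h => hjne (by rw [h])
              exact ⟨hji, hjB, hj2⟩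
          · rintro ⟨hji, hj1, hj2⟩
            refine ⟨mem_mv_of_mem hj1 (fun h => hji ?_), hj2⟩
            have := congrArg Prod.fst h
            simpa using this
        rw [hYeq, card_erase_of_mem (mem_inter.2 ⟨hiB, hiB'⟩)]
        omega
      obtain ⟨x, hx⟩ := ih _ hB₂ B' hB' h0₂ h0' hYcard
      obtain ⟨hx1, hx2⟩ := mem_inter.1 hx
      have hx1' := mem_Xp.1 hx1
      rcases mem_mv_iff.1 hx1' with he | ⟨hxB, _⟩
      · have hxi : x = i := by
          have := congrArg Prod.fst he
          simpa using this
        exfalso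
        exact indep_K1 (hmem hB') i ⟨hxi ▸ mem_Xp.1 hx2, hi2B'⟩
      · exact ⟨x, mem_inter.2 ⟨mem_Xp.2 hxB, hx2⟩⟩

/-- Structure of a member containing `x₀`. -/
lemma zero_member_struct {n r : ℕ} {A : Finset (ℕ × ℕ)} (hA : A ∈ depthTwoClawIndep n r)
    (h0 : ((0:ℕ),(0:ℕ)) ∈ A) {v : ℕ × ℕ} (hv : v ∈ A) :
    v = ((0:ℕ),(0:ℕ)) ∨ (v = (v.1, 1) ∧ 1 ≤ v.1 ∧ v.1 ≤ n) := by
  rcases indep_vert hA hv with h | ⟨ha, hb, hc⟩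
  · exact Or.inl h
  · rcases hc with hc | hc
    · exact Or.inr ⟨hc, ha, hb⟩
    · exact absurd (hc ▸ hv) (indep_K2 hA h0 v.1)

/-- Structure of a member not containing `x₀`. -/
lemma pure_member_struct {n r : ℕ} {A : Finset (ℕ × ℕ)} (hA : A ∈ depthTwoClawIndep n r)
    (h0 : ((0:ℕ),(0:ℕ)) ∉ A) {v : ℕ × ℕ} (hv : v ∈ A) :
    (1 ≤ v.1 ∧ v.1 ≤ n) ∧ (v = (v.1, 1) ∨ v = (v.1, 2)) := by
  rcases indep_vert hA hv with h | ⟨ha, hb, hc⟩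
  · exact absurd (h ▸ hv) h0
  · exact ⟨⟨ha, hb⟩, hc⟩

lemma card_XY {n r : ℕ} {B : Finset (ℕ × ℕ)} (hB : B ∈ depthTwoClawIndep n r)
    (h0 : ((0:ℕ),(0:ℕ)) ∉ B) : (Xp B).card + (Yp B).card = B.card := by
  have hX : (Xp B).card = (B.filter (fun v => v.2 = 1)).card := by
    apply card_image_of_injOn
    intro v hv w hw h
    obtain ⟨hvB, hv2⟩ := mem_filter.1 (mem_coe.1 hv)
    obtain ⟨hwB, hw2⟩ := mem_filter.1 (mem_coe.1 hw)
    exact Prod.ext h (hv2.trans hw2.symm)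
  have hY : (Yp B).card = (B.filter (fun v => v.2 = 2)).card := by
    apply card_image_of_injOn
    intro v hv w hw h
    obtain ⟨hvB, hv2⟩ := mem_filter.1 (mem_coe.1 hv)
    obtain ⟨hwB, hw2⟩ := mem_filter.1 (mem_coe.1 hw)
    exact Prod.ext h (hv2.trans hw2.symm)
  have hsplit : (B.filter (fun v => v.2 = 1)).card + (B.filter (fun v => ¬ v.2 = 1)).card
      = B.card := card_filter_add_card_filter_not _
  have hfe : B.filter (fun v => ¬ v.2 = 1) = B.filter (fun v => v.2 = 2) := by
    apply filter_congr
    intro v hv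
    obtain ⟨_, hc⟩ := pure_member_struct hB h0 hv
    rcases hc with hc | hc
    · have h1 : v.2 = 1 := congrArg Prod.snd hc
      simp [h1]
    · have h2 : v.2 = 2 := congrArg Prod.snd hc
      simp [h2]
  rw [hX, hY, ← hfe, hsplit]

lemma Xp_subset {n r : ℕ} {B : Finset (ℕ × ℕ)} (hB : B ∈ depthTwoClawIndep n r)
    (h0 : ((0:ℕ),(0:ℕ)) ∉ B) : Xp B ⊆ Icc 1 n := by
  intro i hi
  have h := mem_Xp.1 hi
  obtain ⟨⟨h1, h2⟩, _⟩ := pure_member_struct hB h0 h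
  simp only [mem_Icc]
  exact ⟨h1, h2⟩

lemma Yp_subset {n r : ℕ} {B : Finset (ℕ × ℕ)} (hB : B ∈ depthTwoClawIndep n r)
    (h0 : ((0:ℕ),(0:ℕ)) ∉ B) : Yp B ⊆ Icc 1 n := by
  intro i hi
  have h := mem_Yp.1 hi
  obtain ⟨⟨h1, h2⟩, _⟩ := pure_member_struct hB h0 h
  simp only [mem_Icc]
  exact ⟨h1, h2⟩

/-- A zero-free member is determined by its `X`- and `Y`-parts. -/
lemma eq_of_XY {n r : ℕ} {B B' : Finset (ℕ × ℕ)} (hB : B ∈ depthTwoClawIndep n r)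
    (hB' : B' ∈ depthTwoClawIndep n r) (h0 : ((0:ℕ),(0:ℕ)) ∉ B)
    (h0' : ((0:ℕ),(0:ℕ)) ∉ B') (hX : Xp B = Xp B') (hY : Yp B = Yp B') : B = B' := by
  ext v
  constructor
  · intro hv
    obtain ⟨_, hc⟩ := pure_member_struct hB h0 hv
    rcases hc with hc | hc
    · have : v.1 ∈ Xp B := mem_Xp.2 (hc ▸ hv)
      rw [hX] at this
      exact hc ▸ mem_Xp.1 this
    · have : v.1 ∈ Yp B := mem_Yp.2 (hc ▸ hv)
      rw [hY] at this
      exact hc ▸ mem_Yp.1 this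
  · intro hv
    obtain ⟨_, hc⟩ := pure_member_struct hB' h0' hv
    rcases hc with hc | hc
    · have : v.1 ∈ Xp B' := mem_Xp.2 (hc ▸ hv)
      rw [← hX] at this
      exact hc ▸ mem_Xp.1 this
    · have : v.1 ∈ Yp B' := mem_Yp.2 (hc ▸ hv)
      rw [← hY] at this
      exact hc ▸ mem_Yp.1 this








set_option maxHeartbeats 1000000 in
theorem graph_bound {n r : ℕ} (hr : 1 ≤ r) (hrn : 2*r - 1 ≤ n)
    (𝒜 : Finset (Finset (ℕ × ℕ))) (h𝒜 : 𝒜 ⊆ depthTwoClawIndep n r)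
    (hint : ∀ A ∈ 𝒜, ∀ B ∈ 𝒜, (A ∩ B).Nonempty) :
    𝒜.card ≤ B1 n r := by
  obtain ⟨ℬ, hBsub, hBint, hBcard, hstab⟩ := exists_stable_graph n r
    (∑ A ∈ 𝒜, (A.filter (fun v => v.2 = 2)).card) 𝒜 h𝒜 hint le_rfl
  rw [← hBcard]
  set ℬ0 := ℬ.filter (fun A => ((0:ℕ),(0:ℕ)) ∈ A) with hB0
  set ℬ1 := ℬ.filter (fun A => ¬ ((0:ℕ),(0:ℕ)) ∈ A) with hB1
  have hcard_split : ℬ.card = ℬ0.card + ℬ1.card :=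
    (card_filter_add_card_filter_not (fun A => ((0:ℕ),(0:ℕ)) ∈ A)).symm
  have hB0mem : ∀ A ∈ ℬ0, A ∈ depthTwoClawIndep n r ∧ ((0:ℕ),(0:ℕ)) ∈ A := by
    intro A hA
    have h := mem_filter.1 hA
    exact ⟨hBsub h.1, h.2⟩
  have hB1mem : ∀ B ∈ ℬ1, B ∈ depthTwoClawIndep n r ∧ ((0:ℕ),(0:ℕ)) ∉ B := by
    intro B hB
    have h := mem_filter.1 hB
    exact ⟨hBsub h.1, h.2⟩
  set ζ : Finset (ℕ × ℕ) → Finset ℕ :=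
    fun A => insert 0 ((A.erase ((0:ℕ),(0:ℕ))).image Prod.fst) with hζ
  have h0img : ∀ A ∈ ℬ0, (0:ℕ) ∉ (A.erase ((0:ℕ),(0:ℕ))).image Prod.fst := by
    intro A hA h
    obtain ⟨hAi, h0A⟩ := hB0mem A hA
    obtain ⟨v, hv, hv0⟩ := mem_image.1 h
    obtain ⟨hvne, hvA⟩ := mem_erase.1 hv
    rcases zero_member_struct hAi h0A hvA with he | ⟨_, h1, _⟩
    · exact hvne he
    · omega
  have hζrec : ∀ A ∈ ℬ0,
      insert ((0:ℕ),(0:ℕ)) (((ζ A).erase 0).image (fun i => ((i:ℕ), (1:ℕ)))) = A := by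
    intro A hA
    obtain ⟨hAi, h0A⟩ := hB0mem A hA
    have herase : (ζ A).erase 0 = (A.erase ((0:ℕ),(0:ℕ))).image Prod.fst := by
      rw [hζ]
      exact erase_insert (h0img A hA)
    rw [herase]
    ext v
    simp only [mem_insert, mem_image]
    constructor
    · rintro (rfl | ⟨i, ⟨w, hw, rfl⟩, rfl⟩)
      · exact h0A
      · obtain ⟨hwne, hwA⟩ := mem_erase.1 hw
        rcases zero_member_struct hAi h0A hwA with he | ⟨hstruct, _, _⟩
        · exact absurd he hwne
        · exact hstruct ▸ hwA
    · intro hv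
      rcases zero_member_struct hAi h0A hv with rfl | ⟨hstruct, _, _⟩
      · exact Or.inl rfl
      · right
        have hvne : v ≠ ((0:ℕ),(0:ℕ)) := by
          intro he
          rw [he] at hstruct
          have := congrArg Prod.snd hstruct
          simp at this
        exact ⟨v.1, ⟨v, mem_erase.2 ⟨hvne, hv⟩, rfl⟩, hstruct.symm⟩
  set 𝒯f := ℬ0.image ζ with h𝒯f
  have h𝒯fcard : 𝒯f.card = ℬ0.card := by
    apply card_image_of_injOn
    intro A hA A' hA' h
    rw [← hζrec A (mem_coe.1 hA), ← hζrec A' (mem_coe.1 hA'), h]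
  set 𝒳f := ℬ1.image Xp with h𝒳f
  have hfiber : ∀ x ∈ 𝒳f, (ℬ1.filter (fun B => Xp B = x)).card ≤ wt n r x := by
    intro x hx
    obtain ⟨B₀, hB₀, rfl⟩ := mem_image.1 hx
    obtain ⟨hB₀i, h0B₀⟩ := hB1mem B₀ hB₀
    have hXsub := Xp_subset hB₀i h0B₀
    have h0x : (0:ℕ) ∉ Xp B₀ := by
      intro h
      have := hXsub h
      simp only [mem_Icc] at this
      omega
    rw [wt, if_neg h0x]
    have hIcc : (Icc 1 n).card = n := by rw [Nat.card_Icc]; omega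
    have hmaps : ∀ B ∈ ℬ1.filter (fun B => Xp B = Xp B₀),
        Yp B ∈ ((Icc 1 n) \ Xp B₀).powersetCard (r - (Xp B₀).card) := by
      intro B hB
      obtain ⟨hBm, hBx⟩ := mem_filter.1 hB
      obtain ⟨hBi, h0B⟩ := hB1mem B hBm
      simp only [mem_powersetCard]
      constructor
      · intro j hj
        rw [mem_sdiff]
        refine ⟨Yp_subset hBi h0B hj, ?_⟩
        rw [← hBx]
        intro hjx
        exact indep_K1 hBi j ⟨mem_Xp.1 hjx, mem_Yp.1 hj⟩
      · have hXY := card_XY hBi h0B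
        have hcr : B.card = r := (mem_indep_iff.1 hBi).2.1
        rw [← hBx]
        omega
    have hinj : Set.InjOn Yp ↑(ℬ1.filter (fun B => Xp B = Xp B₀)) := by
      intro B hB B' hB' h
      obtain ⟨hBm, hBx⟩ := mem_filter.1 (mem_coe.1 hB)
      obtain ⟨hBm', hBx'⟩ := mem_filter.1 (mem_coe.1 hB')
      obtain ⟨hBi, h0B⟩ := hB1mem B hBm
      obtain ⟨hBi', h0B'⟩ := hB1mem B' hBm'
      exact eq_of_XY hBi hBi' h0B h0B' (hBx.trans hBx'.symm) h
    calc (ℬ1.filter (fun B => Xp B = Xp B₀)).card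
        ≤ (((Icc 1 n) \ Xp B₀).powersetCard (r - (Xp B₀).card)).card :=
          card_le_card_of_injOn Yp hmaps hinj
      _ = (n - (Xp B₀).card).choose (r - (Xp B₀).card) := by
          rw [card_powersetCard, card_sdiff_of_subset hXsub, hIcc]
  have hB1count : ℬ1.card ≤ ∑ x ∈ 𝒳f, wt n r x := by
    rw [card_eq_sum_card_fiberwise (f := Xp) (t := 𝒳f)
      (fun B hB => mem_image_of_mem _ hB)]
    exact sum_le_sum hfiber
  have hXinter := X_inter hBsub hBint hstab
  have h𝒱shape : ∀ V ∈ 𝒯f ∪ 𝒳f, pureOK n r V ∨ zeroOK n r V := by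
    intro V hV
    rcases mem_union.1 hV with h | h
    · right
      obtain ⟨A, hA, rfl⟩ := mem_image.1 h
      obtain ⟨hAi, h0A⟩ := hB0mem A hA
      refine ⟨mem_insert_self _ _, ?_, ?_⟩
      · intro x hx
        rcases mem_insert.1 hx with rfl | hx'
        · exact mem_insert_self _ _
        · apply mem_insert_of_mem
          obtain ⟨v, hv, rfl⟩ := mem_image.1 hx'
          obtain ⟨hvne, hvA⟩ := mem_erase.1 hv
          rcases zero_member_struct hAi h0A hvA with he | ⟨_, h1, h2⟩
          · exact absurd he hvne
          · simp only [mem_Icc]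
            exact ⟨h1, h2⟩
      · have himgcard : ((A.erase ((0:ℕ),(0:ℕ))).image Prod.fst).card = A.card - 1 := by
          rw [card_image_of_injOn, card_erase_of_mem h0A]
          intro v hv w hw hfst
          obtain ⟨hvne, hvA⟩ := mem_erase.1 (mem_coe.1 hv)
          obtain ⟨hwne, hwA⟩ := mem_erase.1 (mem_coe.1 hw)
          rcases zero_member_struct hAi h0A hvA with he | ⟨hv1, _, _⟩
          · exact absurd he hvne
          · rcases zero_member_struct hAi h0A hwA with he | ⟨hw1, _, _⟩
            · exact absurd he hwne
            · rw [hv1, hw1, hfst]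
        have hrA : A.card = r := (mem_indep_iff.1 hAi).2.1
        have hc1 : 1 ≤ A.card := card_pos.2 ⟨_, h0A⟩
        rw [hζ]
        rw [card_insert_of_notMem (h0img A hA), himgcard, hrA]
        omega
    · left
      obtain ⟨B, hB, rfl⟩ := mem_image.1 h
      obtain ⟨hBi, h0B⟩ := hB1mem B hB
      refine ⟨Xp_subset hBi h0B, ?_, ?_⟩
      · obtain ⟨x, hx⟩ := hXinter (Yp B ∩ Yp B).card B (mem_filter.1 hB).1 B
          (mem_filter.1 hB).1 h0B h0B le_rfl
        exact card_pos.2 ⟨x, (mem_inter.1 hx).1⟩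
      · have := card_XY hBi h0B
        have hcr : B.card = r := (mem_indep_iff.1 hBi).2.1
        omega
  have hmix : ∀ A ∈ ℬ0, ∀ B ∈ ℬ1, (ζ A ∩ Xp B).Nonempty := by
    intro A hA B hB
    obtain ⟨hAi, h0A⟩ := hB0mem A hA
    obtain ⟨hBi, h0B⟩ := hB1mem B hB
    obtain ⟨v, hv⟩ := hBint A (mem_filter.1 hA).1 B (mem_filter.1 hB).1
    obtain ⟨hvA, hvB⟩ := mem_inter.1 hv
    rcases zero_member_struct hAi h0A hvA with rfl | ⟨hs, h1, _⟩
    · exact absurd hvB h0B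
    · have hvne : v ≠ ((0:ℕ),(0:ℕ)) := by
        intro he
        rw [he] at hs
        have := congrArg Prod.snd hs
        simp at this
      refine ⟨v.1, mem_inter.2 ⟨?_, mem_Xp.2 (hs ▸ hvB)⟩⟩
      exact mem_insert_of_mem (mem_image.2 ⟨v, mem_erase.2 ⟨hvne, hvA⟩, rfl⟩)
  have h𝒱int : ∀ V ∈ 𝒯f ∪ 𝒳f, ∀ W ∈ 𝒯f ∪ 𝒳f, (V ∩ W).Nonempty := by
    intro V hV W hW
    rcases mem_union.1 hV with h | h <;> rcases mem_union.1 hW with h' | h'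
    · obtain ⟨A, hA, rfl⟩ := mem_image.1 h
      obtain ⟨A', hA', rfl⟩ := mem_image.1 h'
      exact ⟨0, mem_inter.2 ⟨mem_insert_self _ _, mem_insert_self _ _⟩⟩
    · obtain ⟨A, hA, rfl⟩ := mem_image.1 h
      obtain ⟨B, hB, rfl⟩ := mem_image.1 h'
      exact hmix A hA B hB
    · obtain ⟨B, hB, rfl⟩ := mem_image.1 h
      obtain ⟨A, hA, rfl⟩ := mem_image.1 h'
      obtain ⟨x, hx⟩ := hmix A hA B hB
      obtain ⟨h1, h2⟩ := mem_inter.1 hx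
      exact ⟨x, mem_inter.2 ⟨h2, h1⟩⟩
    · obtain ⟨B, hB, rfl⟩ := mem_image.1 h
      obtain ⟨B', hB', rfl⟩ := mem_image.1 h'
      exact hXinter (Yp B ∩ Yp B').card B (mem_filter.1 hB).1 B' (mem_filter.1 hB').1
        (mem_filter.1 hB).2 (mem_filter.1 hB').2 le_rfl
  have hdisj : Disjoint 𝒯f 𝒳f := by
    rw [disjoint_left]
    intro V hV hV'
    obtain ⟨A, hA, rfl⟩ := mem_image.1 hV
    obtain ⟨B, hB, hBe⟩ := mem_image.1 hV'
    have h0ζ : (0:ℕ) ∈ ζ A := mem_insert_self _ _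
    rw [← hBe] at h0ζ
    have := Xp_subset (hB1mem B hB).1 (hB1mem B hB).2 h0ζ
    simp only [mem_Icc] at this
    omega
  have hsum𝒯 : ∑ V ∈ 𝒯f, wt n r V = 𝒯f.card := by
    rw [card_eq_sum_ones]
    apply sum_congr rfl
    intro V hV
    obtain ⟨A, hA, rfl⟩ := mem_image.1 hV
    rw [wt, if_pos (mem_insert_self _ _)]
  have hP := (main_P n r (𝒯f ∪ 𝒳f) hr hrn h𝒱shape h𝒱int).1
  rw [sum_union hdisj, hsum𝒯, h𝒯fcard] at hP
  omega








lemma mem_phi2_1 {S X : Finset ℕ} {j : ℕ} :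
    ((j:ℕ), (1:ℕ)) ∈ insert ((1:ℕ),(1:ℕ))
      ((X.image (fun i => ((i:ℕ), (1:ℕ)))) ∪ ((S \ X).image (fun i => ((i:ℕ), (2:ℕ)))))
      ↔ j = 1 ∨ j ∈ X := by
  constructor
  · intro h
    rcases mem_insert.1 h with he | h
    · exact Or.inl (congrArg Prod.fst he)
    · rcases mem_union.1 h with h | h
      · obtain ⟨i, hi, he⟩ := mem_image.1 h
        have hij : i = j := by simpa using congrArg Prod.fst he
        exact Or.inr (hij ▸ hi)
      · obtain ⟨i, hi, he⟩ := mem_image.1 h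
        have := congrArg Prod.snd he
        simp at this
  · rintro (rfl | hj)
    · exact mem_insert_self _ _
    · exact mem_insert_of_mem (mem_union_left _ (mem_image_of_mem _ hj))

lemma mem_phi2_2 {S X : Finset ℕ} {j : ℕ} :
    ((j:ℕ), (2:ℕ)) ∈ insert ((1:ℕ),(1:ℕ))
      ((X.image (fun i => ((i:ℕ), (1:ℕ)))) ∪ ((S \ X).image (fun i => ((i:ℕ), (2:ℕ)))))
      ↔ j ∈ S \ X := by
  constructor
  · intro h
    rcases mem_insert.1 h with he | h
    · have := congrArg Prod.snd he
      simp at this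
    · rcases mem_union.1 h with h | h
      · obtain ⟨i, hi, he⟩ := mem_image.1 h
        have := congrArg Prod.snd he
        simp at this
      · obtain ⟨i, hi, he⟩ := mem_image.1 h
        have hij : i = j := by simpa using congrArg Prod.fst he
        exact hij ▸ hi
  · intro hj
    exact mem_insert_of_mem (mem_union_right _ (mem_image_of_mem _ hj))

theorem star_count {n r : ℕ} (hr : 1 ≤ r) (hrn : 2*r - 1 ≤ n) (hn : 1 ≤ n) :
    B1 n r ≤ ((depthTwoClawIndep n r).filter (fun I => ((1:ℕ), (1:ℕ)) ∈ I)).card := by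
  classical
  have h1Icc : (1:ℕ) ∈ Icc 1 n := by simp only [mem_Icc]; omega
  have hGcard : ((Icc 1 n).erase 1).card = n - 1 := by
    rw [card_erase_of_mem h1Icc, Nat.card_Icc]
    omega
  set G := (Icc 1 n).erase 1 with hG
  have hGsub : ∀ {j : ℕ}, j ∈ G → (j ≠ 1 ∧ 1 ≤ j ∧ j ≤ n) := by
    intro j hj
    obtain ⟨h1, h2⟩ := mem_erase.1 hj
    simp only [mem_Icc] at h2
    exact ⟨h1, h2.1, h2.2⟩
  -- the signed part
  set M2 := (G.powersetCard (r-1)).sigma (fun S => S.powerset) with hM2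
  set φ2 : (Σ _ : Finset ℕ, Finset ℕ) → Finset (ℕ × ℕ) := fun p =>
    insert ((1:ℕ),(1:ℕ))
      ((p.2.image (fun i => ((i:ℕ), (1:ℕ)))) ∪ ((p.1 \ p.2).image (fun i => ((i:ℕ), (2:ℕ)))))
    with hφ2
  have hM2mem : ∀ p ∈ M2, p.1 ⊆ G ∧ p.1.card = r - 1 ∧ p.2 ⊆ p.1 := by
    intro p hp
    obtain ⟨h1, h2⟩ := mem_sigma.1 hp
    obtain ⟨h3, h4⟩ := mem_powersetCard.1 h1
    exact ⟨h3, h4, mem_powerset.1 h2⟩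
  have hM2card : M2.card = 2^(r-1) * (n-1).choose (r-1) := by
    rw [hM2, card_sigma]
    have hconst : ∀ S ∈ G.powersetCard (r-1), (S.powerset).card = 2^(r-1) := by
      intro S hS
      rw [card_powerset, (mem_powersetCard.1 hS).2]
    rw [sum_congr rfl hconst, sum_const, smul_eq_mul, card_powersetCard, hGcard, mul_comm]
  have hφ2card : ∀ p ∈ M2, (φ2 p).card = r := by
    intro p hp
    obtain ⟨hS, hScard, hXS⟩ := hM2mem p hp
    have h11 : ((1:ℕ),(1:ℕ)) ∉ (p.2.image (fun i => ((i:ℕ), (1:ℕ))))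
        ∪ ((p.1 \ p.2).image (fun i => ((i:ℕ), (2:ℕ)))) := by
      intro h
      rcases mem_union.1 h with h | h
      · obtain ⟨i, hi, he⟩ := mem_image.1 h
        have : i = 1 := congrArg Prod.fst he
        exact (hGsub (hS (hXS hi))).1 (this ▸ rfl)
      · obtain ⟨i, hi, he⟩ := mem_image.1 h
        have := congrArg Prod.snd he
        simp at this
    have hdisj2 : Disjoint (p.2.image (fun i => ((i:ℕ), (1:ℕ))))
        ((p.1 \ p.2).image (fun i => ((i:ℕ), (2:ℕ)))) := by
      rw [disjoint_left]
      intro v hv hv'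
      obtain ⟨i, hi, rfl⟩ := mem_image.1 hv
      obtain ⟨i', hi', he⟩ := mem_image.1 hv'
      have := congrArg Prod.snd he
      simp at this
    have hinj1 : ((p.2.image (fun i => ((i:ℕ), (1:ℕ))))).card = p.2.card :=
      card_image_of_injective _ (fun a b h => congrArg Prod.fst h)
    have hinj2 : (((p.1 \ p.2).image (fun i => ((i:ℕ), (2:ℕ))))).card = (p.1 \ p.2).card :=
      card_image_of_injective _ (fun a b h => congrArg Prod.fst h)
    rw [hφ2]
    rw [card_insert_of_notMem h11, card_union_of_disjoint hdisj2, hinj1, hinj2,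
      card_sdiff_of_subset hXS, hScard]
    have hXle : p.2.card ≤ r - 1 := hScard ▸ card_le_card hXS
    omega
  have hφ2indep : ∀ p ∈ M2, φ2 p ∈ depthTwoClawIndep n r ∧ ((1:ℕ),(1:ℕ)) ∈ φ2 p
      ∧ ((0:ℕ),(0:ℕ)) ∉ φ2 p := by
    intro p hp
    obtain ⟨hS, hScard, hXS⟩ := hM2mem p hp
    have h00 : ((0:ℕ),(0:ℕ)) ∉ φ2 p := by
      intro h
      rw [hφ2] at h
      rcases mem_insert.1 h with he | h
      · have := congrArg Prod.snd he
        simp at this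
      · rcases mem_union.1 h with h | h
        · obtain ⟨i, hi, he⟩ := mem_image.1 h
          have := congrArg Prod.snd he
          simp at this
        · obtain ⟨i, hi, he⟩ := mem_image.1 h
          have := congrArg Prod.snd he
          simp at this
    refine ⟨?_, mem_insert_self _ _, h00⟩
    apply indep_of
    · intro v hv
      rw [hφ2] at hv
      rcases mem_insert.1 hv with rfl | hv'
      · rw [mem_verts_iff]
        exact Or.inr ⟨le_refl _, hn, Or.inl rfl⟩
      · rcases mem_union.1 hv' with h | h
        · obtain ⟨i, hi, rfl⟩ := mem_image.1 h
          rw [mem_verts_iff]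
          have h' := hGsub (hS (hXS hi))
          exact Or.inr ⟨h'.2.1, h'.2.2, Or.inl rfl⟩
        · obtain ⟨i, hi, rfl⟩ := mem_image.1 h
          rw [mem_verts_iff]
          have h' := hGsub (hS (mem_sdiff.1 hi).1)
          exact Or.inr ⟨h'.2.1, h'.2.2, Or.inr rfl⟩
    · exact hφ2card p hp
    · intro j hj
      obtain ⟨hj1, hj2⟩ := hj
      have h1 := mem_phi2_1.1 hj1
      have h2 := mem_sdiff.1 (mem_phi2_2.1 hj2)
      rcases h1 with rfl | h1
      · exact (hGsub (hS h2.1)).1 rfl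
      · exact h2.2 h1
    · intro h0
      exact absurd h0 h00
  have hφ2inj : Set.InjOn φ2 ↑M2 := by
    intro p hp q hq h
    obtain ⟨hSp, _, hXp⟩ := hM2mem p (mem_coe.1 hp)
    obtain ⟨hSq, _, hXq⟩ := hM2mem q (mem_coe.1 hq)
    have hX : p.2 = q.2 := by
      ext j
      constructor
      · intro hj
        have : ((j:ℕ),(1:ℕ)) ∈ φ2 p := by
          rw [hφ2]
          exact mem_phi2_1.2 (Or.inr hj)
        rw [h, hφ2] at this
        rcases mem_phi2_1.1 this with rfl | h'
        · exact absurd (hXp hj) (fun hh => (hGsub (hSp hh)).1 rfl)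
        · exact h'
      · intro hj
        have : ((j:ℕ),(1:ℕ)) ∈ φ2 q := by
          rw [hφ2]
          exact mem_phi2_1.2 (Or.inr hj)
        rw [← h, hφ2] at this
        rcases mem_phi2_1.1 this with rfl | h'
        · exact absurd (hXq hj) (fun hh => (hGsub (hSq hh)).1 rfl)
        · exact h'
    have hSd : p.1 \ p.2 = q.1 \ q.2 := by
      ext j
      constructor
      · intro hj
        have : ((j:ℕ),(2:ℕ)) ∈ φ2 p := by
          rw [hφ2]
          exact mem_phi2_2.2 hj
        rw [h, hφ2] at this
        exact mem_phi2_2.1 this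
      · intro hj
        have : ((j:ℕ),(2:ℕ)) ∈ φ2 q := by
          rw [hφ2]
          exact mem_phi2_2.2 hj
        rw [← h, hφ2] at this
        exact mem_phi2_2.1 this
    have hS : p.1 = q.1 := by
      rw [← sdiff_union_of_subset hXp, ← sdiff_union_of_subset hXq, hSd, hX]
    exact Sigma.ext hS (heq_of_eq hX)
  -- conclusion pieces
  set T := (depthTwoClawIndep n r).filter (fun I => ((1:ℕ), (1:ℕ)) ∈ I) with hT
  have himg2 : M2.image φ2 ⊆ T := by
    intro I hI
    obtain ⟨p, hp, rfl⟩ := mem_image.1 hI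
    obtain ⟨h1, h2, _⟩ := hφ2indep p hp
    exact mem_filter.2 ⟨h1, h2⟩
  have hcard2 : (M2.image φ2).card = 2^(r-1) * (n-1).choose (r-1) := by
    rw [card_image_of_injOn hφ2inj, hM2card]
  by_cases hr2 : 2 ≤ r
  · -- also the x₀-part
    set M1 := G.powersetCard (r-2) with hM1
    set φ1 : Finset ℕ → Finset (ℕ × ℕ) := fun Tt =>
      insert ((0:ℕ),(0:ℕ)) (insert ((1:ℕ),(1:ℕ)) (Tt.image (fun i => ((i:ℕ), (1:ℕ)))))
      with hφ1
    have hM1mem : ∀ Tt ∈ M1, Tt ⊆ G ∧ Tt.card = r - 2 := by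
      intro Tt hTt
      exact mem_powersetCard.1 hTt
    have hmem1 : ∀ Tt j, ((j:ℕ),(1:ℕ)) ∈ φ1 Tt ↔ j = 1 ∨ j ∈ Tt := by
      intro Tt j
      rw [hφ1]
      constructor
      · intro h
        rcases mem_insert.1 h with he | h
        · have := congrArg Prod.snd he
          simp at this
        · rcases mem_insert.1 h with he | h
          · exact Or.inl (congrArg Prod.fst he)
          · obtain ⟨i, hi, he⟩ := mem_image.1 h
            have hij : i = j := by simpa using congrArg Prod.fst he
            exact Or.inr (hij ▸ hi)
      · rintro (rfl | hj)
        · exact mem_insert_of_mem (mem_insert_self _ _)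
        · exact mem_insert_of_mem (mem_insert_of_mem (mem_image_of_mem _ hj))
    have hno2 : ∀ Tt j, ((j:ℕ),(2:ℕ)) ∉ φ1 Tt := by
      intro Tt j h
      rw [hφ1] at h
      rcases mem_insert.1 h with he | h
      · have := congrArg Prod.snd he
        simp at this
      · rcases mem_insert.1 h with he | h
        · have := congrArg Prod.snd he
          simp at this
        · obtain ⟨i, hi, he⟩ := mem_image.1 h
          have := congrArg Prod.snd he
          simp at this
    have hφ1card : ∀ Tt ∈ M1, (φ1 Tt).card = r := by
      intro Tt hTt
      obtain ⟨hTG, hTc⟩ := hM1mem Tt hTt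
      have h11 : ((1:ℕ),(1:ℕ)) ∉ Tt.image (fun i => ((i:ℕ), (1:ℕ))) := by
        intro h
        obtain ⟨i, hi, he⟩ := mem_image.1 h
        have : i = 1 := congrArg Prod.fst he
        exact (hGsub (hTG hi)).1 (this ▸ rfl)
      have h00 : ((0:ℕ),(0:ℕ)) ∉ insert ((1:ℕ),(1:ℕ)) (Tt.image (fun i => ((i:ℕ), (1:ℕ)))) := by
        intro h
        rcases mem_insert.1 h with he | h
        · have := congrArg Prod.snd he
          simp at this
        · obtain ⟨i, hi, he⟩ := mem_image.1 h
          have h1 : i = 0 := congrArg Prod.fst he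
          have := (hGsub (hTG hi)).2.1
          omega
      rw [hφ1, card_insert_of_notMem h00, card_insert_of_notMem h11,
        card_image_of_injective _ (fun a b h => congrArg Prod.fst h), hTc]
      omega
    have hφ1indep : ∀ Tt ∈ M1, φ1 Tt ∈ depthTwoClawIndep n r ∧ ((1:ℕ),(1:ℕ)) ∈ φ1 Tt
        ∧ ((0:ℕ),(0:ℕ)) ∈ φ1 Tt := by
      intro Tt hTt
      obtain ⟨hTG, hTc⟩ := hM1mem Tt hTt
      refine ⟨?_, mem_insert_of_mem (mem_insert_self _ _), mem_insert_self _ _⟩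
      apply indep_of
      · intro v hv
        rw [hφ1] at hv
        rcases mem_insert.1 hv with rfl | hv'
        · rw [mem_verts_iff]
          exact Or.inl rfl
        · rcases mem_insert.1 hv' with rfl | h
          · rw [mem_verts_iff]
            exact Or.inr ⟨le_refl _, hn, Or.inl rfl⟩
          · obtain ⟨i, hi, rfl⟩ := mem_image.1 h
            rw [mem_verts_iff]
            have h' := hGsub (hTG hi)
            exact Or.inr ⟨h'.2.1, h'.2.2, Or.inl rfl⟩
      · exact hφ1card Tt hTt
      · intro j hj
        exact hno2 Tt j hj.2
      · intro _ j
        exact hno2 Tt j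
    have hφ1inj : Set.InjOn φ1 ↑M1 := by
      intro Tt hTt Tt' hTt' h
      obtain ⟨hTG, _⟩ := hM1mem Tt (mem_coe.1 hTt)
      obtain ⟨hTG', _⟩ := hM1mem Tt' (mem_coe.1 hTt')
      ext j
      constructor
      · intro hj
        have : ((j:ℕ),(1:ℕ)) ∈ φ1 Tt := (hmem1 Tt j).2 (Or.inr hj)
        rw [h] at this
        rcases (hmem1 Tt' j).1 this with rfl | h'
        · exact absurd hj (fun hh => (hGsub (hTG hh)).1 rfl)
        · exact h'
      · intro hj
        have : ((j:ℕ),(1:ℕ)) ∈ φ1 Tt' := (hmem1 Tt' j).2 (Or.inr hj)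
        rw [← h] at this
        rcases (hmem1 Tt j).1 this with rfl | h'
        · exact absurd hj (fun hh => (hGsub (hTG' hh)).1 rfl)
        · exact h'
    have himg1 : M1.image φ1 ⊆ T := by
      intro I hI
      obtain ⟨Tt, hTt, rfl⟩ := mem_image.1 hI
      obtain ⟨h1, h2, _⟩ := hφ1indep Tt hTt
      exact mem_filter.2 ⟨h1, h2⟩
    have hcard1 : (M1.image φ1).card = (n-1).choose (r-2) := by
      rw [card_image_of_injOn hφ1inj, hM1, card_powersetCard, hGcard]
    have hdisj : Disjoint (M1.image φ1) (M2.image φ2) := by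
      rw [disjoint_left]
      intro I hI hI'
      obtain ⟨Tt, hTt, rfl⟩ := mem_image.1 hI
      obtain ⟨p, hp, he⟩ := mem_image.1 hI'
      have h1 := (hφ1indep Tt hTt).2.2
      have h2 := (hφ2indep p hp).2.2
      rw [he] at h2
      exact h2 h1
    have hunion : (M1.image φ1) ∪ (M2.image φ2) ⊆ T := union_subset himg1 himg2
    have := card_le_card hunion
    rw [card_union_of_disjoint hdisj, hcard1, hcard2] at this
    rw [B1, B2, if_pos hr2]
    omega
  · -- r = 1
    have := card_le_card himg2
    rw [hcard2] at this
    rw [B1, B2, if_neg hr2]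
    omega


end FJT

/-- **Theorem (Feghali, Johnson and Thomas).** If `n ≥ 2r - 1`, then every
intersecting family of `r`-element independent sets of the depth-two claw `Tₙ`
has size at most the number of `r`-element independent sets of `Tₙ` containing
the vertex `x₁ = (1,1)`. -/
theorem depthTwoClaw_star_property_of_large_n
    (n r : ℕ) (hn : 1 ≤ n) (hr : 1 ≤ r) (hrn : 2 * r - 1 ≤ n)
    (ℰ : Finset (Finset (ℕ × ℕ)))
    (hℰ : ℰ ⊆ depthTwoClawIndep n r)
    (hint : ∀ A ∈ ℰ, ∀ B ∈ ℰ, (A ∩ B).Nonempty) :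
    ℰ.card ≤
      ((depthTwoClawIndep n r).filter (fun I => ((1 : ℕ), (1 : ℕ)) ∈ I)).card :=
  le_trans (FJT.graph_bound hr hrn ℰ hℰ hint) (FJT.star_count hr hrn hn)
end
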